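/- arXiv:2011.00672 — 5 statements merged into one kernel-verified Lean document; each statement's English description precedes it below -/
import Mathlib

section
/- Let k be an odd positive integer and let G be a k-edge-connected finite graph. Then any two k-edge-cuts in G do not cross; that is, if δ(A) and δ(B) are edge-cuts of size k, then at least one of A∩B, A\B, B\A, and the complement of A∪B is empty. -/
/-- The edge cut `δ(A)` of a multigraph `ends : E → V × V`: edges with exactly
one endpoint in `A`. -/
def edgeCut {V E : Type} (ends : E → V × V) (A : Set V) : Set E :=
  {e | ((ends e).1 ∈ A ∧ (ends e).2 ∉ A) ∨ ((ends e).1 ∉ A ∧ (ends e).2 ∈ A)}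

/-- Edges between `X` and `Y`. -/
def btw {V E : Type} (ends : E → V × V) (X Y : Set V) : Set E :=
  {e | ((ends e).1 ∈ X ∧ (ends e).2 ∈ Y) ∨ ((ends e).1 ∈ Y ∧ (ends e).2 ∈ X)}

lemma mem_btw {V E : Type} (ends : E → V × V) (X Y : Set V) (e : E) :
    e ∈ btw ends X Y ↔
      ((ends e).1 ∈ X ∧ (ends e).2 ∈ Y) ∨ ((ends e).1 ∈ Y ∧ (ends e).2 ∈ X) :=
  Iff.rfl

lemma mem_edgeCut {V E : Type} (ends : E → V × V) (A : Set V) (e : E) :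
    e ∈ edgeCut ends A ↔
      ((ends e).1 ∈ A ∧ (ends e).2 ∉ A) ∨ ((ends e).1 ∉ A ∧ (ends e).2 ∈ A) :=
  Iff.rfl

lemma disjoint_btw {V E : Type} (ends : E → V × V) {X Y Z W : Set V}
    (h1 : Disjoint X Z ∨ Disjoint Y W) (h2 : Disjoint X W ∨ Disjoint Y Z) :
    Disjoint (btw ends X Y) (btw ends Z W) := by
  rw [Set.disjoint_left]
  intro e he he'
  simp only [mem_btw] at he he'
  rcases h1 with h1 | h1 <;> rcases h2 with h2 | h2 <;>
    rw [Set.disjoint_left] at h1 h2 <;> tauto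

lemma ncard3 {E : Type} [Fintype E] (S1 S2 S3 : Set E)
    (h12 : Disjoint S1 S2) (h13 : Disjoint S1 S3) (h23 : Disjoint S2 S3) :
    (S1 ∪ S2 ∪ S3).ncard = S1.ncard + S2.ncard + S3.ncard := by
  rw [Set.ncard_union_eq (by rw [Set.disjoint_union_left]; exact ⟨h13, h23⟩)
      (Set.toFinite _) (Set.toFinite _),
    Set.ncard_union_eq h12 (Set.toFinite _) (Set.toFinite _)]

lemma ncard4 {E : Type} [Fintype E] (S1 S2 S3 S4 : Set E)
    (h12 : Disjoint S1 S2) (h13 : Disjoint S1 S3) (h14 : Disjoint S1 S4)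
    (h23 : Disjoint S2 S3) (h24 : Disjoint S2 S4) (h34 : Disjoint S3 S4) :
    (S1 ∪ S2 ∪ S3 ∪ S4).ncard = S1.ncard + S2.ncard + S3.ncard + S4.ncard := by
  rw [Set.ncard_union_eq
      (by rw [Set.disjoint_union_left, Set.disjoint_union_left]
          exact ⟨⟨h14, h24⟩, h34⟩) (Set.toFinite _) (Set.toFinite _),
    ncard3 _ _ _ h12 h13 h23]

/-- Let `k` be an odd positive integer and `G` a `k`-edge-connected finite
graph.  Then any two `k`-edge-cuts do not cross: at least one of
`A ∩ B`, `A \ B`, `B \ A`, `(A ∪ B)ᶜ` is empty. -/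
theorem stmt_1 {V E : Type} [Fintype V] [Fintype E] (ends : E → V × V)
    (k : ℕ) (hpos : 0 < k) (hodd : Odd k)
    (hconn : ∀ A : Set V, A.Nonempty → Aᶜ.Nonempty → k ≤ (edgeCut ends A).ncard)
    (A B : Set V)
    (hA : (edgeCut ends A).ncard = k) (hAne : A.Nonempty) (hAco : Aᶜ.Nonempty)
    (hB : (edgeCut ends B).ncard = k) (hBne : B.Nonempty) (hBco : Bᶜ.Nonempty) :
    A ∩ B = ∅ ∨ A \ B = ∅ ∨ B \ A = ∅ ∨ (A ∪ B)ᶜ = ∅ := by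
  by_contra hcon
  push_neg at hcon
  obtain ⟨h1e, h2e, h3e, h4e⟩ := hcon
  -- the four parts
  set P1 : Set V := A ∩ B with hP1
  set P2 : Set V := A \ B with hP2
  set P3 : Set V := B \ A with hP3
  set P4 : Set V := (A ∪ B)ᶜ with hP4
  -- pairwise disjointness of parts
  have d12 : Disjoint P1 P2 := by
    rw [Set.disjoint_left]; intro x hx hx'
    simp only [hP1, hP2, Set.mem_inter_iff, Set.mem_diff] at hx hx'; tauto
  have d13 : Disjoint P1 P3 := by
    rw [Set.disjoint_left]; intro x hx hx'
    simp only [hP1, hP3, Set.mem_inter_iff, Set.mem_diff] at hx hx'; tauto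
  have d14 : Disjoint P1 P4 := by
    rw [Set.disjoint_left]; intro x hx hx'
    simp only [hP1, hP4, Set.mem_inter_iff, Set.mem_compl_iff, Set.mem_union] at hx hx'; tauto
  have d23 : Disjoint P2 P3 := by
    rw [Set.disjoint_left]; intro x hx hx'
    simp only [hP2, hP3, Set.mem_diff] at hx hx'; tauto
  have d24 : Disjoint P2 P4 := by
    rw [Set.disjoint_left]; intro x hx hx'
    simp only [hP2, hP4, Set.mem_diff, Set.mem_compl_iff, Set.mem_union] at hx hx'; tauto
  have d34 : Disjoint P3 P4 := by
    rw [Set.disjoint_left]; intro x hx hx'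
    simp only [hP3, hP4, Set.mem_diff, Set.mem_compl_iff, Set.mem_union] at hx hx'; tauto
  have d21 := d12.symm
  have d31 := d13.symm
  have d41 := d14.symm
  have d32 := d23.symm
  have d42 := d24.symm
  have d43 := d34.symm
  -- the six quantities
  set n12 := (btw ends P1 P2).ncard with hn12
  set n13 := (btw ends P1 P3).ncard with hn13
  set n14 := (btw ends P1 P4).ncard with hn14
  set n23 := (btw ends P2 P3).ncard with hn23
  set n24 := (btw ends P2 P4).ncard with hn24
  set n34 := (btw ends P3 P4).ncard with hn34
  -- decompositions
  have eA : (edgeCut ends A).ncard = n13 + n14 + n23 + n24 := by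
    have hs : edgeCut ends A =
        btw ends P1 P3 ∪ btw ends P1 P4 ∪ btw ends P2 P3 ∪ btw ends P2 P4 := by
      ext e
      simp only [mem_edgeCut, mem_btw, hP1, hP2, hP3, hP4, Set.mem_union,
        Set.mem_inter_iff, Set.mem_diff, Set.mem_compl_iff]
      by_cases q1 : (ends e).1 ∈ A <;> by_cases q2 : (ends e).2 ∈ A <;>
        by_cases q3 : (ends e).1 ∈ B <;> by_cases q4 : (ends e).2 ∈ B <;>
        simp [q1, q2, q3, q4]
    rw [hs, ncard4 _ _ _ _ (disjoint_btw _ (by tauto) (by tauto))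
      (disjoint_btw _ (by tauto) (by tauto))
      (disjoint_btw _ (by tauto) (by tauto))
      (disjoint_btw _ (by tauto) (by tauto))
      (disjoint_btw _ (by tauto) (by tauto))
      (disjoint_btw _ (by tauto) (by tauto))]
  have eB : (edgeCut ends B).ncard = n12 + n14 + n23 + n34 := by
    have hs : edgeCut ends B =
        btw ends P1 P2 ∪ btw ends P1 P4 ∪ btw ends P2 P3 ∪ btw ends P3 P4 := by
      ext e
      simp only [mem_edgeCut, mem_btw, hP1, hP2, hP3, hP4, Set.mem_union,
        Set.mem_inter_iff, Set.mem_diff, Set.mem_compl_iff]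
      by_cases q1 : (ends e).1 ∈ A <;> by_cases q2 : (ends e).2 ∈ A <;>
        by_cases q3 : (ends e).1 ∈ B <;> by_cases q4 : (ends e).2 ∈ B <;>
        simp [q1, q2, q3, q4]
    rw [hs, ncard4 _ _ _ _ (disjoint_btw _ (by tauto) (by tauto))
      (disjoint_btw _ (by tauto) (by tauto))
      (disjoint_btw _ (by tauto) (by tauto))
      (disjoint_btw _ (by tauto) (by tauto))
      (disjoint_btw _ (by tauto) (by tauto))
      (disjoint_btw _ (by tauto) (by tauto))]
  have eP1 : (edgeCut ends P1).ncard = n12 + n13 + n14 := by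
    have hs : edgeCut ends P1 =
        btw ends P1 P2 ∪ btw ends P1 P3 ∪ btw ends P1 P4 := by
      ext e
      simp only [mem_edgeCut, mem_btw, hP1, hP2, hP3, hP4, Set.mem_union,
        Set.mem_inter_iff, Set.mem_diff, Set.mem_compl_iff]
      by_cases q1 : (ends e).1 ∈ A <;> by_cases q2 : (ends e).2 ∈ A <;>
        by_cases q3 : (ends e).1 ∈ B <;> by_cases q4 : (ends e).2 ∈ B <;>
        simp [q1, q2, q3, q4]
    rw [hs, ncard3 _ _ _ (disjoint_btw _ (by tauto) (by tauto))
      (disjoint_btw _ (by tauto) (by tauto))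
      (disjoint_btw _ (by tauto) (by tauto))]
  have eP2 : (edgeCut ends P2).ncard = n12 + n23 + n24 := by
    have hs : edgeCut ends P2 =
        btw ends P1 P2 ∪ btw ends P2 P3 ∪ btw ends P2 P4 := by
      ext e
      simp only [mem_edgeCut, mem_btw, hP1, hP2, hP3, hP4, Set.mem_union,
        Set.mem_inter_iff, Set.mem_diff, Set.mem_compl_iff]
      by_cases q1 : (ends e).1 ∈ A <;> by_cases q2 : (ends e).2 ∈ A <;>
        by_cases q3 : (ends e).1 ∈ B <;> by_cases q4 : (ends e).2 ∈ B <;>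
        simp [q1, q2, q3, q4]
    rw [hs, ncard3 _ _ _ (disjoint_btw _ (by tauto) (by tauto))
      (disjoint_btw _ (by tauto) (by tauto))
      (disjoint_btw _ (by tauto) (by tauto))]
  have eP3 : (edgeCut ends P3).ncard = n13 + n23 + n34 := by
    have hs : edgeCut ends P3 =
        btw ends P1 P3 ∪ btw ends P2 P3 ∪ btw ends P3 P4 := by
      ext e
      simp only [mem_edgeCut, mem_btw, hP1, hP2, hP3, hP4, Set.mem_union,
        Set.mem_inter_iff, Set.mem_diff, Set.mem_compl_iff]
      by_cases q1 : (ends e).1 ∈ A <;> by_cases q2 : (ends e).2 ∈ A <;>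
        by_cases q3 : (ends e).1 ∈ B <;> by_cases q4 : (ends e).2 ∈ B <;>
        simp [q1, q2, q3, q4]
    rw [hs, ncard3 _ _ _ (disjoint_btw _ (by tauto) (by tauto))
      (disjoint_btw _ (by tauto) (by tauto))
      (disjoint_btw _ (by tauto) (by tauto))]
  have eU : (edgeCut ends (A ∪ B)).ncard = n14 + n24 + n34 := by
    have hs : edgeCut ends (A ∪ B) =
        btw ends P1 P4 ∪ btw ends P2 P4 ∪ btw ends P3 P4 := by
      ext e
      simp only [mem_edgeCut, mem_btw, hP1, hP2, hP3, hP4, Set.mem_union,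
        Set.mem_inter_iff, Set.mem_diff, Set.mem_compl_iff]
      by_cases q1 : (ends e).1 ∈ A <;> by_cases q2 : (ends e).2 ∈ A <;>
        by_cases q3 : (ends e).1 ∈ B <;> by_cases q4 : (ends e).2 ∈ B <;>
        simp [q1, q2, q3, q4]
    rw [hs, ncard3 _ _ _ (disjoint_btw _ (by tauto) (by tauto))
      (disjoint_btw _ (by tauto) (by tauto))
      (disjoint_btw _ (by tauto) (by tauto))]
  -- the four connectivity lower bounds
  have hP1c : P1ᶜ.Nonempty := by
    obtain ⟨x, hx⟩ := hAco
    exact ⟨x, by simp only [hP1, Set.mem_compl_iff, Set.mem_inter_iff] at hx ⊢; tauto⟩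
  have hP2c : P2ᶜ.Nonempty := by
    obtain ⟨x, hx⟩ := hBne
    exact ⟨x, by simp only [hP2, Set.mem_compl_iff, Set.mem_diff]; tauto⟩
  have hP3c : P3ᶜ.Nonempty := by
    obtain ⟨x, hx⟩ := hAne
    exact ⟨x, by simp only [hP3, Set.mem_compl_iff, Set.mem_diff]; tauto⟩
  have hUne : (A ∪ B).Nonempty := hAne.mono Set.subset_union_left
  have i1 := hconn P1 h1e hP1c
  have i2 := hconn P2 h2e hP2c
  have i3 := hconn P3 h3e hP3c
  have i4 := hconn (A ∪ B) hUne h4e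
  rw [eP1] at i1
  rw [eP2] at i2
  rw [eP3] at i3
  rw [eU] at i4
  rw [eA] at hA
  rw [eB] at hB
  obtain ⟨w, hw⟩ := hodd
  omega
end

section
/- For every odd integer i ≥ 5 and every prescription function p: V(B_i) → Z_3 with sum of values equal to 0 in Z_3, the circulant graph B_i admits an orientation such that at each vertex v, the number of edges directed into v minus the number directed out of v is congruent to p(v) modulo 3. -/
/-- Net flow (indegree minus outdegree, in `ZMod 3`) at the vertex `x` of the
multigraph `ends : E → V × V` under the orientation `o` (edge `e` goes from
`(ends e).1` to `(ends e).2` when `o e = true`, and oppositely otherwise). -/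
def mnet {V E : Type} [DecidableEq V] [Fintype E]
    (ends : E → V × V) (o : E → Bool) (x : V) : ZMod 3 :=
  ∑ e : E,
    ((if (if o e then (ends e).2 else (ends e).1) = x then (1 : ZMod 3) else 0)
      - (if (if o e then (ends e).1 else (ends e).2) = x then (1 : ZMod 3) else 0))

/-- The circulant graph `B_i` as a multigraph: the edge `(j, false)` joins
`v_j` to `v_{j+1}` and the edge `(j, true)` joins `v_j` to `v_{j+(i-1)/2}`. -/
def BcircEnds (i : ℕ) : ZMod i × Bool → ZMod i × ZMod i := fun e =>
  if e.2 then (e.1, e.1 + (((i - 1) / 2 : ℕ) : ZMod i)) else (e.1, e.1 + 1)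

namespace Stmt3Aux

/-- Partial sums of the (shifted) prescription sequence `r`. -/
def Qp (r : ℕ → ZMod 3) (t : ℕ) : ZMod 3 := ∑ m ∈ Finset.range t, r (m + 1)

/-- Greedy `{0,1}`-valued sequence keeping `Qp r t + Bp r t + Bp r (t-1) ≠ 2`. -/
def Bp (r : ℕ → ZMod 3) : ℕ → ZMod 3
  | 0 => 0
  | t + 1 => if Bp r t + Qp r (t + 1) = 2 then 1 else 0

/-- The companion `{0,1}`-valued sequence. -/
def Ap (n : ℕ) (r : ℕ → ZMod 3) (t : ℕ) : ZMod 3 :=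
  if t = 0 then 1 - Bp r (n - 1) else 1 - Qp r t - Bp r t - Bp r (t - 1)

lemma Bp_mem (r : ℕ → ZMod 3) (t : ℕ) : Bp r t = 0 ∨ Bp r t = 1 := by
  cases t with
  | zero => exact Or.inl rfl
  | succ t =>
    simp only [Bp]
    split_ifs
    · exact Or.inr rfl
    · exact Or.inl rfl

lemma Bp_s (r : ℕ → ZMod 3) (t : ℕ) :
    Qp r (t + 1) + Bp r (t + 1) + Bp r t ≠ 2 := by
  simp only [Bp]
  split_ifs with h
  · intro hc
    have h10 : (1 : ZMod 3) = 0 := by linear_combination hc - h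
    exact absurd h10 (by decide)
  · intro hc
    exact h (by linear_combination hc)

lemma Ap_mem (n : ℕ) (r : ℕ → ZMod 3) (t : ℕ) : Ap n r t = 0 ∨ Ap n r t = 1 := by
  unfold Ap
  split_ifs with h
  · rcases Bp_mem r (n - 1) with h' | h' <;> rw [h']
    · right; decide
    · left; decide
  · obtain ⟨u, rfl⟩ : ∃ u, t = u + 1 := ⟨t - 1, by omega⟩
    have hs := Bp_s r u
    have key : ∀ x y z : ZMod 3, x + y + z ≠ 2 →
        (1 - x - y - z = 0 ∨ 1 - x - y - z = 1) := by decide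
    rw [Nat.add_sub_cancel]
    exact key _ _ _ hs

lemma constraint_ne {i : ℕ} [NeZero i] (hi : 5 ≤ i) (q : ZMod i → ZMod 3)
    (r : ℕ → ZMod 3) (hr : ∀ t, r t = q ((t : ℕ) : ZMod i))
    (w : ZMod i) (hw : w ≠ 0) :
    Ap i r ((w - 1).val) - Ap i r w.val + Bp r ((w - 2).val) - Bp r w.val = q w := by
  have hvlt : w.val < i := ZMod.val_lt w
  have hv1 : 1 ≤ w.val := by
    rcases Nat.eq_zero_or_pos w.val with h | h
    · exact absurd ((ZMod.val_eq_zero w).mp h) hw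
    · exact h
  have hcw : ((w.val : ℕ) : ZMod i) = w := ZMod.natCast_rightInverse w
  have hW1 : (w - 1).val = w.val - 1 := by
    have h1 : w - 1 = (((w.val - 1 : ℕ)) : ZMod i) := by
      rw [Nat.cast_sub hv1, hcw, Nat.cast_one]
    rw [h1, ZMod.val_cast_of_lt (by omega)]
  rcases Nat.lt_or_ge w.val 2 with h2 | h2
  · -- the case `w.val = 1`
    have hv : w.val = 1 := by omega
    have hW2 : (w - 2).val = i - 1 := by
      have h1 : w - 2 = ((i - 1 : ℕ) : ZMod i) := by
        rw [← hcw, hv, Nat.cast_sub (by omega : 1 ≤ i), ZMod.natCast_self]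
        push_cast
        ring
      rw [h1, ZMod.val_cast_of_lt (by omega)]
    rw [hW1, hW2, hv]
    have hq1 : Qp r 1 = q w := by
      rw [Qp, Finset.sum_range_one, hr 1]
      congr 1
      rw [← hcw, hv, Nat.cast_one]
    rw [show Ap i r (1 - 1) = 1 - Bp r (i - 1) from if_pos rfl,
      show Ap i r 1 = 1 - Qp r 1 - Bp r 1 - Bp r 0 from if_neg one_ne_zero,
      show Bp r 0 = (0 : ZMod 3) from rfl, hq1]
    ring
  · -- the case `2 ≤ w.val`
    obtain ⟨u, hu2⟩ : ∃ u, w.val = u + 2 := ⟨w.val - 2, by omega⟩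
    have hW2 : (w - 2).val = u := by
      have h1 : w - 2 = ((u : ℕ) : ZMod i) := by
        rw [← hcw, hu2]
        push_cast
        ring
      rw [h1, ZMod.val_cast_of_lt (by omega)]
    rw [hW1, hW2, hu2]
    have hA1 : Ap i r (u + 2 - 1) = 1 - Qp r (u + 1) - Bp r (u + 1) - Bp r u := by
      simp [Ap]
    have hA2 : Ap i r (u + 2) = 1 - Qp r (u + 2) - Bp r (u + 2) - Bp r (u + 1) := by
      simp [Ap]
    have hQ : Qp r (u + 2) = Qp r (u + 1) + r (u + 2) := by
      rw [Qp, Qp, Finset.sum_range_succ]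
    have hrq : r (u + 2) = q w := by
      rw [hr]
      congr 1
      rw [← hcw, hu2]
    rw [hA1, hA2, hQ, hrq]
    ring

lemma constraint_all {i : ℕ} [NeZero i] (hi : 5 ≤ i) (q : ZMod i → ZMod 3)
    (hq : ∑ w : ZMod i, q w = 0)
    (r : ℕ → ZMod 3) (hr : ∀ t, r t = q ((t : ℕ) : ZMod i))
    (w : ZMod i) :
    Ap i r ((w - 1).val) - Ap i r w.val + Bp r ((w - 2).val) - Bp r w.val = q w := by
  by_cases h0 : w = 0
  · subst h0
    have hLsum : ∑ u : ZMod i,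
        (Ap i r ((u - 1).val) - Ap i r u.val + Bp r ((u - 2).val) - Bp r u.val) = 0 := by
      have e1 : ∑ u : ZMod i, Ap i r ((u - 1).val) = ∑ u : ZMod i, Ap i r u.val :=
        Fintype.sum_bijective (fun u => u - 1) (Equiv.subRight (1 : ZMod i)).bijective
          _ _ (fun u => rfl)
      have e2 : ∑ u : ZMod i, Bp r ((u - 2).val) = ∑ u : ZMod i, Bp r u.val :=
        Fintype.sum_bijective (fun u => u - 2) (Equiv.subRight (2 : ZMod i)).bijective
          _ _ (fun u => rfl)
      rw [Finset.sum_sub_distrib, Finset.sum_add_distrib, Finset.sum_sub_distrib, e1, e2]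
      ring
    have hsingle : ∑ u : ZMod i,
        ((Ap i r ((u - 1).val) - Ap i r u.val + Bp r ((u - 2).val) - Bp r u.val) - q u)
        = (Ap i r (((0 : ZMod i) - 1).val) - Ap i r (0 : ZMod i).val
            + Bp r (((0 : ZMod i) - 2).val) - Bp r (0 : ZMod i).val) - q 0 := by
      apply Finset.sum_eq_single (0 : ZMod i)
      · intro b _ hb
        rw [constraint_ne hi q r hr b hb]
        ring
      · intro h
        exact absurd (Finset.mem_univ _) h
    have hz : ∑ u : ZMod i,
        ((Ap i r ((u - 1).val) - Ap i r u.val + Bp r ((u - 2).val) - Bp r u.val) - q u) = 0 := by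
      rw [Finset.sum_sub_distrib, hLsum, hq]
      ring
    rw [hsingle] at hz
    linear_combination hz
  · exact constraint_ne hi q r hr w h0

lemma mnet_eval {i : ℕ} [NeZero i] (o : ZMod i × Bool → Bool) (x : ZMod i) :
    mnet (BcircEnds i) o x =
      ((if o (x - 1, false) then (1 : ZMod 3) else -1)
          - (if o (x, false) then (1 : ZMod 3) else -1))
        + ((if o (x - (((i - 1) / 2 : ℕ) : ZMod i), true) then (1 : ZMod 3) else -1)
          - (if o (x, true) then (1 : ZMod 3) else -1)) := by
  have key : ∀ (c : ZMod i) (f : ZMod i → ZMod 3),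
      ∑ j : ZMod i, f j * ((if j + c = x then (1 : ZMod 3) else 0)
        - (if j = x then (1 : ZMod 3) else 0))
        = f (x - c) - f x := by
    intro c f
    have e1 : ∑ j : ZMod i, f j * (if j + c = x then (1 : ZMod 3) else 0) = f (x - c) := by
      rw [Finset.sum_eq_single (x - c)]
      · simp
      · intro b _ hb
        have hbc : ¬(b + c = x) := fun h => hb (by rw [← h]; ring)
        simp [hbc]
      · intro h
        exact absurd (Finset.mem_univ _) h
    have e2 : ∑ j : ZMod i, f j * (if j = x then (1 : ZMod 3) else 0) = f x := by
      rw [Finset.sum_eq_single x]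
      · simp
      · intro b _ hb
        simp [hb]
      · intro h
        exact absurd (Finset.mem_univ _) h
    simp only [mul_sub]
    rw [Finset.sum_sub_distrib, e1, e2]
  have step1 : mnet (BcircEnds i) o x
      = ∑ j : ZMod i,
          ((fun j => if o (j, false) then (1 : ZMod 3) else -1) j
              * ((if j + 1 = x then (1 : ZMod 3) else 0) - (if j = x then (1 : ZMod 3) else 0))
            + (fun j => if o (j, true) then (1 : ZMod 3) else -1) j
              * ((if j + (((i - 1) / 2 : ℕ) : ZMod i) = x then (1 : ZMod 3) else 0)
                  - (if j = x then (1 : ZMod 3) else 0))) := by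
    unfold mnet
    rw [Fintype.sum_prod_type]
    apply Finset.sum_congr rfl
    intro j _
    rw [Fintype.sum_bool]
    by_cases h1 : o (j, true) <;> by_cases h2 : o (j, false) <;>
      simp [BcircEnds, h1, h2] <;> ring
  rw [step1, Finset.sum_add_distrib,
    key 1 (fun j => if o (j, false) then (1 : ZMod 3) else -1),
    key (((i - 1) / 2 : ℕ) : ZMod i) (fun j => if o (j, true) then (1 : ZMod 3) else -1)]

end Stmt3Aux

open Stmt3Aux in
/-- For every odd `i ≥ 5` and every prescription `p : V(B_i) → ZMod 3` summing
to `0`, the circulant graph `B_i` (jumps `1` and `(i-1)/2`) has an orientation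
with `indegree(v) - outdegree(v) ≡ p(v) (mod 3)` at every vertex `v`. -/
theorem stmt_3 (i : ℕ) [NeZero i] (h5 : 5 ≤ i) (hodd : Odd i)
    (p : ZMod i → ZMod 3) (hp : ∑ v : ZMod i, p v = 0) :
    ∃ o : ZMod i × Bool → Bool, ∀ v : ZMod i, mnet (BcircEnds i) o v = p v := by
  classical
  set K : ZMod i := (((i - 1) / 2 : ℕ) : ZMod i) with hK
  have h2K : (2 : ZMod i) * K = -1 := by
    obtain ⟨m, hm⟩ := hodd
    have hd : (i - 1) / 2 = m := by omega
    rw [hK, hd]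
    have : ((2 * m : ℕ) : ZMod i) = ((i : ℕ) : ZMod i) - 1 := by
      rw [hm]
      push_cast
      ring
    push_cast at this ⊢
    rw [this, ZMod.natCast_self]
    ring
  have hu : (K + 1) * 2 = 1 := by linear_combination h2K
  set q : ZMod i → ZMod 3 := fun w => p ((K + 1) * w) with hqdef
  have hq : ∑ w : ZMod i, q w = 0 := by
    have hbij : Function.Bijective (fun w : ZMod i => (K + 1) * w) := by
      apply Function.bijective_iff_has_inverse.2
      refine ⟨fun w => 2 * w, fun w => ?_, fun w => ?_⟩
      · show 2 * ((K + 1) * w) = w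
        linear_combination w * hu
      · show (K + 1) * (2 * w) = w
        linear_combination w * hu
    calc ∑ w : ZMod i, q w = ∑ w : ZMod i, p w :=
          Fintype.sum_bijective (fun w => (K + 1) * w) hbij _ _ (fun w => rfl)
      _ = 0 := hp
  set r : ℕ → ZMod 3 := fun t => q ((t : ℕ) : ZMod i) with hrdef
  have hr : ∀ t, r t = q ((t : ℕ) : ZMod i) := fun t => rfl
  set o : ZMod i × Bool → Bool := fun e =>
    if e.2 then decide (Ap i r ((2 * e.1 - 1).val) = 1)
    else decide (Bp r ((2 * e.1).val) = 0) with ho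
  refine ⟨o, fun v => ?_⟩
  have hS1 : ∀ j : ZMod i,
      (if o (j, false) then (1 : ZMod 3) else -1) = 1 + Bp r ((2 * j).val) := by
    intro j
    rcases Bp_mem r ((2 * j).val) with h | h
    · simp [ho, h]
    · rw [ho]
      simp only [h]
      norm_num
      decide
  have hT1 : ∀ j : ZMod i,
      (if o (j, true) then (1 : ZMod 3) else -1) = -1 - Ap i r ((2 * j - 1).val) := by
    intro j
    rcases Ap_mem i r ((2 * j - 1).val) with h | h
    · simp [ho, h]
    · rw [ho]
      simp only [h]
      norm_num
      decide
  rw [mnet_eval o v, ← hK]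
  rw [hS1, hS1, hT1, hT1]
  have hx1 : 2 * (v - 1) = 2 * v - 2 := by ring
  have hx2 : 2 * (v - K) - 1 = 2 * v := by linear_combination (-1 : ZMod i) * h2K
  rw [hx1, hx2]
  have hc := constraint_all h5 q hq r hr (2 * v)
  have hqv : q (2 * v) = p v := by
    rw [hqdef]
    show p ((K + 1) * (2 * v)) = p v
    congr 1
    linear_combination v * hu
  rw [hqv] at hc
  linear_combination hc
end

section
/- For every odd integer i ≥ 5 and every valid prescription function p, the graph A_i, obtained from the circulant graph B_i by subdividing the edge v_1v_i with a new vertex v_0 and adding the edge v_0 v_{(i+1)/2}, admits an orientation such that indegree(v) − outdegree(v) ≡ p(v) (mod 3) for every vertex v. -/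
/-- The graph `A_i`, obtained from the circulant graph `B_i` (jumps `1` and
`(i-1)/2`, vertices `v_1, …, v_i` identified with `ZMod i` via `v_t ↦ t`, so
`v_i ↦ 0`) by subdividing the edge `v_1 v_i` with a new vertex `v_0 = none` and
adding the edge `v_0 v_{(i+1)/2}`.  Edges: all edges of `B_i` except the edge
`(0, false)` (which is `v_i v_1`), plus three new edges `v_0 v_1`, `v_0 v_i`,
`v_0 v_{(i+1)/2}`. -/
def AcircEnds (i : ℕ) :
    ({e : ZMod i × Bool // e ≠ ((0 : ZMod i), false)} ⊕ Fin 3) →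
      Option (ZMod i) × Option (ZMod i) := fun e =>
  match e with
  | Sum.inl ee =>
      if ee.1.2 then (some ee.1.1, some (ee.1.1 + (((i - 1) / 2 : ℕ) : ZMod i)))
      else (some ee.1.1, some (ee.1.1 + 1))
  | Sum.inr r =>
      if r = 0 then (none, some 1)
      else if r = 1 then (none, some 0)
      else (none, some (((i + 1) / 2 : ℕ) : ZMod i))

namespace S4

abbrev Z3 := ZMod 3

def real3 (w : Z3) : Z3 × Z3 := if w = 0 then (1,1) else if w = 1 then (2,1) else (1,2)

lemma real3_sub (w : Z3) : (real3 w).1 - (real3 w).2 = w := by revert w; decide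
lemma real3_fst_ne (w : Z3) : (real3 w).1 ≠ 0 := by revert w; decide
lemma real3_snd_ne (w : Z3) : (real3 w).2 ≠ 0 := by revert w; decide

/-- state r = (T_r, x_r, y_r, z_r) -/
def chain (i k : ℕ) (q : ZMod i → Z3) (g2 : Z3) : ℕ → Z3 × Z3 × Z3 × Z3
  | 0 => (1, (real3 (q (k : ZMod i))).1, q 0 - g2, (real3 (q (k : ZMod i))).2)
  | r+1 =>
    let pr := chain i k q g2 r
    let T : Z3 := if q ((i - (r+1) : ℕ) : ZMod i) + 1 - pr.2.2.2 + pr.2.2.1 ≠ 0 then 1 else 2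
    let y : Z3 := q ((i - (r+1) : ℕ) : ZMod i) + T - pr.2.2.2 + pr.2.2.1
    let w : Z3 := q ((k - (r+1) : ℕ) : ZMod i) + pr.2.1 - T
    (T, (real3 w).1, y, (real3 w).2)

variable {i k : ℕ} {q : ZMod i → Z3} {g2 : Z3}

lemma chain_x_succ (r : ℕ) : (chain i k q g2 (r+1)).2.1
    = (real3 (q ((k - (r+1) : ℕ) : ZMod i) + (chain i k q g2 r).2.1 - (chain i k q g2 (r+1)).1)).1 := rfl

lemma chain_z_succ (r : ℕ) : (chain i k q g2 (r+1)).2.2.2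
    = (real3 (q ((k - (r+1) : ℕ) : ZMod i) + (chain i k q g2 r).2.1 - (chain i k q g2 (r+1)).1)).2 := rfl

lemma chain_y_succ (r : ℕ) : (chain i k q g2 (r+1)).2.2.1
    = q ((i - (r+1) : ℕ) : ZMod i) + (chain i k q g2 (r+1)).1 - (chain i k q g2 r).2.2.2 + (chain i k q g2 r).2.2.1 := rfl

lemma chain_T_succ (r : ℕ) : (chain i k q g2 (r+1)).1
    = if q ((i - (r+1) : ℕ) : ZMod i) + 1 - (chain i k q g2 r).2.2.2 + (chain i k q g2 r).2.2.1 ≠ 0 then 1 else 2 := rfl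

lemma chain_eq_u (r : ℕ) :
    (chain i k q g2 (r+1)).1 + (chain i k q g2 (r+1)).2.1 - (chain i k q g2 (r+1)).2.2.2
      - (chain i k q g2 r).2.1 = q ((k - (r+1) : ℕ) : ZMod i) := by
  rw [chain_x_succ, chain_z_succ]
  linear_combination real3_sub (q ((k - (r+1) : ℕ) : ZMod i) + (chain i k q g2 r).2.1 - (chain i k q g2 (r+1)).1)

lemma chain_eq_v (r : ℕ) :
    -(chain i k q g2 (r+1)).1 + (chain i k q g2 (r+1)).2.2.1 + (chain i k q g2 r).2.2.2
      - (chain i k q g2 r).2.2.1 = q ((i - (r+1) : ℕ) : ZMod i) := by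
  rw [chain_y_succ]; ring

lemma chain_eq_u0 : (chain i k q g2 0).2.1 - (chain i k q g2 0).2.2.2 = q (k : ZMod i) :=
  real3_sub _

lemma chain_x_ne (r : ℕ) : (chain i k q g2 r).2.1 ≠ 0 := by
  cases r with
  | zero => exact real3_fst_ne _
  | succ r => rw [chain_x_succ]; exact real3_fst_ne _

lemma chain_z_ne (r : ℕ) : (chain i k q g2 r).2.2.2 ≠ 0 := by
  cases r with
  | zero => exact real3_snd_ne _
  | succ r => rw [chain_z_succ]; exact real3_snd_ne _

lemma chain_T_ne (r : ℕ) : (chain i k q g2 r).1 ≠ 0 := by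
  cases r with
  | zero => exact one_ne_zero
  | succ r => rw [chain_T_succ]; split_ifs <;> decide

lemma chain_y_ne (hg : q 0 - g2 ≠ 0) (r : ℕ) : (chain i k q g2 r).2.2.1 ≠ 0 := by
  cases r with
  | zero => exact hg
  | succ r =>
    rw [chain_y_succ, chain_T_succ]
    split_ifs
    · next h => simpa using h
    · next h =>
      have h' : q ((i - (r+1) : ℕ) : ZMod i) + 1 - (chain i k q g2 r).2.2.2 + (chain i k q g2 r).2.2.1 = 0 := by
        simpa using h
      intro hc
      have : (1 : Z3) = 0 := by linear_combination hc - h'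
      exact one_ne_zero this

end S4
namespace S4

def g2v (i : ℕ) (q : ZMod i → Z3) : Z3 := if q 0 = 1 then 2 else 1

/-- the chain with the chosen g2 -/
def ck (i k : ℕ) (q : ZMod i → Z3) : ℕ → Z3 × Z3 × Z3 × Z3 := chain i k q (g2v i q)

def Xv (i k : ℕ) (q : ZMod i → Z3) : Z3 :=
  q ((k+1 : ℕ) : ZMod i) + (ck i k q (k-1)).2.2.1 - (ck i k q (k-1)).2.2.2 + g2v i q

def Gv (i k : ℕ) (q : ZMod i → Z3) : Z3 := if Xv i k q - 1 ≠ 0 then 1 else 2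

def Tkv (i k : ℕ) (q : ZMod i → Z3) : Z3 := Xv i k q - Gv i k q

def Jf (i k : ℕ) (q : ZMod i → Z3) : ℕ → Z3 := fun t =>
  if t = 0 then Gv i k q
  else if t ≤ k then (ck i k q (k - t)).2.2.2
  else if t = k+1 then g2v i q
  else (ck i k q (i - t)).1

def Pf (i k : ℕ) (q : ZMod i → Z3) : ℕ → Z3 := fun t =>
  if t = 0 then 1
  else if t ≤ k - 1 then (ck i k q (k-1-t)).2.1
  else if t = k then Gv i k q
  else if t = k+1 then (ck i k q (k-1)).2.2.1
  else (ck i k q (i-1-t)).2.2.1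

variable (i k : ℕ) (q : ZMod i → Z3)

lemma g2v_prop : q 0 - g2v i q ≠ 0 := by
  unfold g2v
  split_ifs with h
  · rw [h]; decide
  · intro hc; exact h (by linear_combination hc)

lemma g2v_ne : g2v i q ≠ 0 := by unfold g2v; split_ifs <;> decide

lemma Gv_ne : Gv i k q ≠ 0 := by unfold Gv; split_ifs <;> decide

lemma Tkv_ne : Tkv i k q ≠ 0 := by
  unfold Tkv Gv
  split_ifs with h
  · exact h
  · have hx : Xv i k q - 1 = 0 := not_not.mp (by simpa using h)
    intro hc
    exact one_ne_zero (α := Z3) (by linear_combination hx - hc)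

lemma Tkv_eq : q ((k+1 : ℕ) : ZMod i) =
    Tkv i k q + (ck i k q (k-1)).2.2.2 - (ck i k q (k-1)).2.2.1 + Gv i k q - g2v i q := by
  unfold Tkv Xv; ring

lemma Jf_ne (t : ℕ) : Jf i k q t ≠ 0 := by
  unfold Jf
  split_ifs
  · exact Gv_ne i k q
  · exact chain_z_ne _
  · exact g2v_ne i q
  · exact chain_T_ne _

lemma Pf_ne (t : ℕ) : Pf i k q t ≠ 0 := by
  unfold Pf
  split_ifs
  · exact one_ne_zero
  · exact chain_x_ne _
  · exact Gv_ne i k q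
  · exact chain_y_ne (g2v_prop i q) _
  · exact chain_y_ne (g2v_prop i q) _

lemma Jf_zero : Jf i k q 0 = Gv i k q := by simp [Jf]
lemma Jf_le (t : ℕ) (h1 : t ≠ 0) (h2 : t ≤ k) : Jf i k q t = (ck i k q (k - t)).2.2.2 := by
  unfold Jf; rw [if_neg h1, if_pos h2]
lemma Jf_k1 (hk : 1 ≤ k) : Jf i k q (k+1) = g2v i q := by
  unfold Jf; rw [if_neg (by omega), if_neg (by omega), if_pos rfl]
lemma Jf_big (t : ℕ) (h : k+1 < t) : Jf i k q t = (ck i k q (i - t)).1 := by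
  unfold Jf; rw [if_neg (by omega), if_neg (by omega), if_neg (by omega)]
lemma Pf_zero : Pf i k q 0 = 1 := by simp [Pf]
lemma Pf_le (t : ℕ) (h1 : t ≠ 0) (h2 : t ≤ k - 1) : Pf i k q t = (ck i k q (k-1-t)).2.1 := by
  unfold Pf; rw [if_neg h1, if_pos h2]
lemma Pf_k (hk : 1 ≤ k) : Pf i k q k = Gv i k q := by
  unfold Pf; rw [if_neg (by omega), if_neg (by omega), if_pos rfl]
lemma Pf_k1 (hk : 1 ≤ k) : Pf i k q (k+1) = (ck i k q (k-1)).2.2.1 := by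
  unfold Pf; rw [if_neg (by omega), if_neg (by omega), if_neg (by omega), if_pos rfl]
lemma Pf_big (t : ℕ) (h : k+1 < t) : Pf i k q t = (ck i k q (i-1-t)).2.2.1 := by
  unfold Pf; rw [if_neg (by omega), if_neg (by omega), if_neg (by omega), if_neg (by omega)]

end S4
namespace S4

lemma ck0_y (i k : ℕ) (q : ZMod i → Z3) : (ck i k q 0).2.2.1 = q 0 - g2v i q := rfl

lemma ck0_sub (i k : ℕ) (q : ZMod i → Z3) :
    (ck i k q 0).2.1 - (ck i k q 0).2.2.2 = q ((k : ℕ) : ZMod i) := real3_sub _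

lemma ck_eq_u (i k : ℕ) (q : ZMod i → Z3) (r : ℕ) :
    (ck i k q (r+1)).1 + (ck i k q (r+1)).2.1 - (ck i k q (r+1)).2.2.2
      - (ck i k q r).2.1 = q ((k - (r+1) : ℕ) : ZMod i) := chain_eq_u r

lemma ck_eq_v (i k : ℕ) (q : ZMod i → Z3) (r : ℕ) :
    -(ck i k q (r+1)).1 + (ck i k q (r+1)).2.2.1 + (ck i k q r).2.2.2
      - (ck i k q r).2.2.1 = q ((i - (r+1) : ℕ) : ZMod i) := chain_eq_v r

lemma main_some (i k : ℕ) [NeZero i] (hik : i = 2*k+1) (hk : 2 ≤ k)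
    (q : ZMod i → Z3) (u : ZMod i) :
    Jf i k q ((u - (((i-1)/2 : ℕ) : ZMod i)).val) - Jf i k q u.val
      + Pf i k q ((u - 1).val) - Pf i k q u.val
      - ((if (1 : ZMod i) = u then 1 else 0) - (if (0 : ZMod i) = u then (1:Z3) else 0))
          * Pf i k q ((0 : ZMod i)).val
      + (if (1 : ZMod i) = u then (ck i k q (k-1)).2.1 else 0)
      + (if (0 : ZMod i) = u then Gv i k q else 0)
      + (if ((((i+1)/2 : ℕ) : ZMod i)) = u then Tkv i k q else 0) = q u := by
  have hK : ((i-1)/2 : ℕ) = k := by omega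
  have hK1 : ((i+1)/2 : ℕ) = k+1 := by omega
  rw [hK, hK1]
  have hnlt : u.val < i := ZMod.val_lt u
  have hu : ((u.val : ℕ) : ZMod i) = u := ZMod.natCast_rightInverse u
  set n := u.val with hn
  have hval : ∀ m : ℕ, m < i → ((m : ZMod i)).val = m := fun m hm => ZMod.val_natCast_of_lt hm
  have hsub : ∀ m : ℕ, m ≤ n → u - (m : ZMod i) = ((n - m : ℕ) : ZMod i) := by
    intro m hm; rw [← hu, ← Nat.cast_sub hm]
  have hsub' : ∀ m : ℕ, n < m → m ≤ i → u - (m : ZMod i) = ((n + i - m : ℕ) : ZMod i) := by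
    intro m h1 h2
    rw [← hu]
    have h3 : ((n + i - m : ℕ) : ZMod i) = ((n + i : ℕ) : ZMod i) - (m : ZMod i) := by
      rw [Nat.cast_sub (by omega)]
    rw [h3]; push_cast [ZMod.natCast_self]; ring
  have hcond : ∀ m : ℕ, m < i → (((m : ℕ) : ZMod i) = u ↔ m = n) := by
    intro m hm
    constructor
    · intro h
      have := congrArg ZMod.val h
      rwa [hval m hm] at this
    · rintro rfl; exact hu
  have hone : (1 : ZMod i) = ((1:ℕ) : ZMod i) := by norm_num
  have hzero : (0 : ZMod i) = ((0:ℕ) : ZMod i) := by norm_num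
  have hvz : ((0 : ZMod i)).val = 0 := ZMod.val_zero
  rw [hvz, Pf_zero]
  have hc1 : ((1 : ZMod i) = u) ↔ 1 = n := by rw [hone]; exact hcond 1 (by omega)
  have hc0 : ((0 : ZMod i) = u) ↔ 0 = n := by rw [hzero]; exact hcond 0 (by omega)
  have hck1 : ((((k+1:ℕ)) : ZMod i) = u) ↔ k+1 = n := hcond (k+1) (by omega)
  rcases Nat.lt_or_ge n 1 with hcase | h1
  · -- Case A : n = 0
    have hn0 : n = 0 := by omega
    have e1 : u - ((k:ℕ) : ZMod i) = (((k+1:ℕ)) : ZMod i) := by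
      rw [hsub' k (by omega) (by omega)]; congr 1; omega
    have e2 : u - (1 : ZMod i) = (((2*k:ℕ)) : ZMod i) := by
      rw [hone, hsub' 1 (by omega) (by omega)]; congr 1; omega
    rw [e1, e2, hval (k+1) (by omega), hval (2*k) (by omega)]
    simp only [hc1, hc0, hck1]
    rw [← hu]
    rw [if_neg (show ¬(1 = n) from by omega), if_neg (show ¬(1 = n) from by omega),
        if_pos (show 0 = n from by omega), if_pos (show 0 = n from by omega),
        if_neg (show ¬(k+1 = n) from by omega)]
    rw [hn0, Nat.cast_zero]
    rw [Jf_k1 i k q (by omega), Jf_zero, Pf_big i k q (2*k) (by omega),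
        show i-1-2*k = 0 from by omega, ck0_y, Pf_zero]
    ring
  · rcases Nat.lt_or_ge n 2 with hcase | h2
    · -- Case B : n = 1
      have hn1 : n = 1 := by omega
      have e1 : u - ((k:ℕ) : ZMod i) = (((k+2:ℕ)) : ZMod i) := by
        rw [hsub' k (by omega) (by omega)]; congr 1; omega
      have e2 : u - (1 : ZMod i) = (((0:ℕ)) : ZMod i) := by
        rw [hone, hsub 1 (by omega)]; congr 1; omega
      rw [e1, e2, hval (k+2) (by omega), hval 0 (by omega)]
      simp only [hc1, hc0, hck1]
      rw [← hu]
      rw [if_pos (show 1 = n from by omega), if_pos (show 1 = n from by omega),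
          if_neg (show ¬(0 = n) from by omega), if_neg (show ¬(0 = n) from by omega),
          if_neg (show ¬(k+1 = n) from by omega)]
      rw [hn1]
      rw [Jf_big i k q (k+2) (by omega), show i - (k+2) = k-1 from by omega,
          Jf_le i k q 1 (by omega) (by omega),
          Pf_zero, Pf_le i k q 1 (by omega) (by omega), show k-1-1 = k-2 from by omega]
      have h := ck_eq_u i k q (k-2)
      rw [show k-2+1 = k-1 from by omega, show k - (k-1) = 1 from by omega] at h
      linear_combination h
    · rcases Nat.lt_or_ge n k with hcase | h3
      · -- Case C : 2 ≤ n ≤ k-1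
        have e1 : u - ((k:ℕ) : ZMod i) = (((n+k+1:ℕ)) : ZMod i) := by
          rw [hsub' k (by omega) (by omega)]; congr 1; omega
        have e2 : u - (1 : ZMod i) = (((n-1:ℕ)) : ZMod i) := by
          rw [hone, hsub 1 (by omega)]
        rw [e1, e2, hval (n+k+1) (by omega), hval (n-1) (by omega)]
        simp only [hc1, hc0, hck1]
        rw [← hu]
        rw [if_neg (show ¬(1 = n) from by omega), if_neg (show ¬(1 = n) from by omega),
            if_neg (show ¬(0 = n) from by omega), if_neg (show ¬(0 = n) from by omega),
            if_neg (show ¬(k+1 = n) from by omega)]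
        rw [Jf_big i k q (n+k+1) (by omega), show i - (n+k+1) = k-n from by omega,
            Jf_le i k q n (by omega) (by omega),
            Pf_le i k q (n-1) (by omega) (by omega), show k-1-(n-1) = k-n from by omega,
            Pf_le i k q n (by omega) (by omega), show k-1-n = k-n-1 from by omega]
        have h := ck_eq_u i k q (k-n-1)
        rw [show k-n-1+1 = k-n from by omega, show k - (k-n) = n from by omega] at h
        linear_combination h
      · rcases Nat.lt_or_ge n (k+1) with hcase | h4
        · -- Case D : n = k
          have hnk : n = k := by omega
          have e1 : u - ((k:ℕ) : ZMod i) = (((0:ℕ)) : ZMod i) := by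
            rw [hsub k (by omega)]; congr 1; omega
          have e2 : u - (1 : ZMod i) = (((k-1:ℕ)) : ZMod i) := by
            rw [hone, hsub 1 (by omega)]; congr 1; omega
          rw [e1, e2, hval 0 (by omega), hval (k-1) (by omega)]
          simp only [hc1, hc0, hck1]
          rw [← hu]
          rw [if_neg (show ¬(1 = n) from by omega), if_neg (show ¬(1 = n) from by omega),
              if_neg (show ¬(0 = n) from by omega), if_neg (show ¬(0 = n) from by omega),
              if_neg (show ¬(k+1 = n) from by omega)]
          rw [hnk]
          rw [Jf_zero, Jf_le i k q k (by omega) (by omega), show k - k = 0 from by omega,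
              Pf_le i k q (k-1) (by omega) (by omega), show k-1-(k-1) = 0 from by omega,
              Pf_k i k q (by omega)]
          linear_combination ck0_sub i k q
        · rcases Nat.lt_or_ge n (k+2) with hcase | h5
          · -- Case E : n = k+1
            have hnk1 : n = k+1 := by omega
            have e1 : u - ((k:ℕ) : ZMod i) = (((1:ℕ)) : ZMod i) := by
              rw [hsub k (by omega)]; congr 1; omega
            have e2 : u - (1 : ZMod i) = (((k:ℕ)) : ZMod i) := by
              rw [hone, hsub 1 (by omega)]; congr 1; omega
            rw [e1, e2, hval 1 (by omega), hval k (by omega)]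
            simp only [hc1, hc0, hck1]
            rw [← hu]
            rw [if_neg (show ¬(1 = n) from by omega), if_neg (show ¬(1 = n) from by omega),
                if_neg (show ¬(0 = n) from by omega), if_neg (show ¬(0 = n) from by omega),
                if_pos (show k+1 = n from by omega)]
            rw [hnk1]
            rw [Jf_le i k q 1 (by omega) (by omega),
                Jf_k1 i k q (by omega), Pf_k i k q (by omega), Pf_k1 i k q (by omega)]
            have h := Tkv_eq i k q
            rw [show ((k+1 : ℕ) : ZMod i) = (((k:ℕ)+1 : ℕ) : ZMod i) from rfl] at h
            linear_combination -h
          · rcases Nat.lt_or_ge n (k+3) with hcase | h6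
            · -- Case F : n = k+2
              have hnk2 : n = k+2 := by omega
              have e1 : u - ((k:ℕ) : ZMod i) = (((2:ℕ)) : ZMod i) := by
                rw [hsub k (by omega)]; congr 1; omega
              have e2 : u - (1 : ZMod i) = (((k+1:ℕ)) : ZMod i) := by
                rw [hone, hsub 1 (by omega)]; congr 1; omega
              rw [e1, e2, hval 2 (by omega), hval (k+1) (by omega)]
              simp only [hc1, hc0, hck1]
              rw [← hu]
              rw [if_neg (show ¬(1 = n) from by omega), if_neg (show ¬(1 = n) from by omega),
                  if_neg (show ¬(0 = n) from by omega), if_neg (show ¬(0 = n) from by omega),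
                  if_neg (show ¬(k+1 = n) from by omega)]
              rw [hnk2]
              rw [Jf_le i k q 2 (by omega) (by omega),
                  Jf_big i k q (k+2) (by omega), show i - (k+2) = k-1 from by omega,
                  Pf_k1 i k q (by omega), Pf_big i k q (k+2) (by omega),
                  show i-1-(k+2) = k-2 from by omega]
              have h := ck_eq_v i k q (k-2)
              rw [show k-2+1 = k-1 from by omega, show i - (k-1) = k+2 from by omega] at h
              linear_combination h
            · -- Case G : k+3 ≤ n ≤ 2k
              have e1 : u - ((k:ℕ) : ZMod i) = (((n-k:ℕ)) : ZMod i) := by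
                rw [hsub k (by omega)]
              have e2 : u - (1 : ZMod i) = (((n-1:ℕ)) : ZMod i) := by
                rw [hone, hsub 1 (by omega)]
              rw [e1, e2, hval (n-k) (by omega), hval (n-1) (by omega)]
              simp only [hc1, hc0, hck1]
              rw [← hu]
              rw [if_neg (show ¬(1 = n) from by omega), if_neg (show ¬(1 = n) from by omega),
                  if_neg (show ¬(0 = n) from by omega), if_neg (show ¬(0 = n) from by omega),
                  if_neg (show ¬(k+1 = n) from by omega)]
              rw [Jf_le i k q (n-k) (by omega) (by omega), show k - (n-k) = i-n-1 from by omega,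
                  Jf_big i k q n (by omega),
                  Pf_big i k q (n-1) (by omega), show i-1-(n-1) = i-n from by omega,
                  Pf_big i k q n (by omega), show i-1-n = i-n-1 from by omega]
              have h := ck_eq_v i k q (i-n-1)
              rw [show i-n-1+1 = i-n from by omega, show i - (i-n) = n from by omega] at h
              linear_combination h




lemma mnet_eq {V E : Type} [DecidableEq V] [Fintype E] (ends : E → V × V)
    (F : E → Z3) (hF : ∀ e, F e ≠ 0) (x : V) :
    mnet ends (fun e => decide (F e = 1)) x
      = ∑ e : E, ((if (ends e).2 = x then 1 else 0) - (if (ends e).1 = x then (1:Z3) else 0)) * F e := by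
  unfold mnet
  apply Finset.sum_congr rfl
  intro e _
  have h : F e = 1 ∨ F e = 2 := by
    have := hF e; revert this; generalize F e = a; revert a; decide
  rcases h with h | h
  · simp only [h, show decide True = true from rfl, if_true]
    ring
  · simp only [h, show decide ((2:Z3) = 1) = false from rfl, Bool.false_eq_true, if_false]
    split_ifs <;> decide

lemma mnet_total {V E : Type} [DecidableEq V] [Fintype E] [Fintype V] (ends : E → V × V)
    (o : E → Bool) : ∑ x : V, mnet ends o x = 0 := by
  unfold mnet
  rw [Finset.sum_comm]
  apply Finset.sum_eq_zero
  intro e _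
  rw [Finset.sum_sub_distrib, Finset.sum_ite_eq, Finset.sum_ite_eq]
  simp



def AcircPair (i : ℕ) (t : ZMod i × Bool) : Option (ZMod i) × Option (ZMod i) :=
  if t.2 then (some t.1, some (t.1 + (((i - 1) / 2 : ℕ) : ZMod i)))
  else (some t.1, some (t.1 + 1))

def mkV {i : ℕ} (J P : ZMod i → Z3) (t : ZMod i × Bool) : Z3 :=
  if t.2 then J t.1 else P t.1

def mkF {i : ℕ} (J P : ZMod i → Z3) (a b c : Z3) :
    ({e : ZMod i × Bool // e ≠ ((0 : ZMod i), false)} ⊕ Fin 3) → Z3 := fun e =>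
  match e with
  | Sum.inl ee => mkV J P ee.1
  | Sum.inr r => if r = 0 then a else if r = 1 then b else c

variable {i : ℕ} [NeZero i]

lemma sum_indicator (c u : ZMod i) (g : ZMod i → Z3) :
    ∑ t : ZMod i, (if t + c = u then (1:Z3) else 0) * g t = g (u - c) := by
  have h : ∀ t : ZMod i, (if t + c = u then (1:Z3) else 0) * g t
      = if t = u - c then g t else 0 := by
    intro t
    by_cases h : t + c = u
    · rw [if_pos h, if_pos (by rw [eq_sub_iff_add_eq]; exact h), one_mul]
    · rw [if_neg h, if_neg (by rw [eq_sub_iff_add_eq]; exact h), zero_mul]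
  simp only [h]
  rw [Finset.sum_ite_eq']
  simp

lemma sum_indicator0 (u : ZMod i) (g : ZMod i → Z3) :
    ∑ t : ZMod i, (if t = u then (1:Z3) else 0) * g t = g u := by
  have h : ∀ t : ZMod i, (if t = u then (1:Z3) else 0) * g t
      = if t = u then g t else 0 := by
    intro t; by_cases h : t = u
    · rw [if_pos h, if_pos h, one_mul]
    · rw [if_neg h, if_neg h, zero_mul]
  simp only [h]
  rw [Finset.sum_ite_eq']
  simp

lemma sum_closed (J P : ZMod i → Z3) (a b c : Z3) (u : ZMod i) :
    (∑ e : ({e : ZMod i × Bool // e ≠ ((0 : ZMod i), false)} ⊕ Fin 3),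
      ((if (AcircEnds i e).2 = some u then 1 else 0)
        - (if (AcircEnds i e).1 = some u then (1:Z3) else 0)) * (mkF J P a b c e))
    = J (u - (((i-1)/2 : ℕ) : ZMod i)) - J u + P (u - 1) - P u
      - ((if (1 : ZMod i) = u then 1 else 0) - (if (0 : ZMod i) = u then (1:Z3) else 0)) * P 0
      + (if (1 : ZMod i) = u then a else 0) + (if (0 : ZMod i) = u then b else 0)
      + (if ((((i+1)/2 : ℕ) : ZMod i)) = u then c else 0) := by
  rw [Fintype.sum_sum_type]
  -- the Fin 3 part
  have hr : (∑ r : Fin 3,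
      ((if (AcircEnds i (Sum.inr r)).2 = some u then 1 else 0)
        - (if (AcircEnds i (Sum.inr r)).1 = some u then (1:Z3) else 0)) * (mkF J P a b c (Sum.inr r)))
      = (if (1 : ZMod i) = u then a else 0) + (if (0 : ZMod i) = u then b else 0)
        + (if ((((i+1)/2 : ℕ) : ZMod i)) = u then c else 0) := by
    rw [Fin.sum_univ_three]
    rw [show AcircEnds i (Sum.inr 0) = (none, some 1) from rfl,
        show AcircEnds i (Sum.inr 1) = (none, some 0) from rfl,
        show AcircEnds i (Sum.inr 2) = (none, some (((i+1)/2 : ℕ) : ZMod i)) from rfl,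
        show mkF J P a b c (Sum.inr 0) = a from rfl,
        show mkF J P a b c (Sum.inr 1) = b from rfl,
        show mkF J P a b c (Sum.inr 2) = c from rfl]
    simp only [Option.some.injEq, show ∀ v : ZMod i, (none = some v) = False from fun v => by simp,
      if_false, sub_zero, ite_mul, one_mul, zero_mul]
  rw [hr]
  -- the subtype part
  have hf0 : ∀ ee : {e : ZMod i × Bool // e ≠ ((0 : ZMod i), false)},
      ((if (AcircEnds i (Sum.inl ee)).2 = some u then 1 else 0)
        - (if (AcircEnds i (Sum.inl ee)).1 = some u then (1:Z3) else 0)) * (mkF J P a b c (Sum.inl ee))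
      = (fun t => ((if (AcircPair i t).2 = some u then 1 else 0)
        - (if (AcircPair i t).1 = some u then (1:Z3) else 0)) * (mkV J P t)) ee.val := by
    intro ee; rfl
  rw [Finset.sum_congr rfl (fun ee _ => hf0 ee)]
  rw [← Finset.sum_subtype (Finset.univ.erase ((0 : ZMod i), false)) (by simp)
      (fun t => ((if (AcircPair i t).2 = some u then 1 else 0)
        - (if (AcircPair i t).1 = some u then (1:Z3) else 0)) * (mkV J P t))]
  rw [Finset.sum_erase_eq_sub (Finset.mem_univ _)]
  rw [Fintype.sum_prod_type]
  have hbool : ∀ t : ZMod i,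
      (∑ b : Bool, ((if (AcircPair i (t, b)).2 = some u then 1 else 0)
        - (if (AcircPair i (t, b)).1 = some u then (1:Z3) else 0)) * (mkV J P (t, b)))
      = ((if t + (((i-1)/2 : ℕ) : ZMod i) = u then 1 else 0) * J t
          - (if t = u then (1:Z3) else 0) * J t)
        + ((if t + 1 = u then 1 else 0) * P t - (if t = u then (1:Z3) else 0) * P t) := by
    intro t
    rw [Fintype.sum_bool]
    rw [show AcircPair i (t, true) = (some t, some (t + (((i-1)/2 : ℕ) : ZMod i))) from rfl,
        show AcircPair i (t, false) = (some t, some (t + 1)) from rfl,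
        show mkV J P (t, true) = J t from rfl,
        show mkV J P (t, false) = P t from rfl]
    simp only [Option.some.injEq]
    ring
  rw [Finset.sum_congr rfl (fun t _ => hbool t)]
  rw [Finset.sum_add_distrib, Finset.sum_sub_distrib, Finset.sum_sub_distrib]
  rw [sum_indicator, sum_indicator, sum_indicator0, sum_indicator0]
  simp only [AcircPair, mkV, if_false, if_true, Option.some.injEq]
  norm_num
  ring

end S4

/-- For every odd `i ≥ 5` and every valid prescription `p` (summing to `0` in
`ZMod 3`), the graph `A_i` has an orientation with
`indegree(v) - outdegree(v) ≡ p(v) (mod 3)` at every vertex. -/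
theorem stmt_4 (i : ℕ) [NeZero i] (h5 : 5 ≤ i) (hodd : Odd i)
    (p : Option (ZMod i) → ZMod 3) (hp : ∑ v : Option (ZMod i), p v = 0) :
    ∃ o : ({e : ZMod i × Bool // e ≠ ((0 : ZMod i), false)} ⊕ Fin 3) → Bool,
      ∀ v : Option (ZMod i), mnet (AcircEnds i) o v = p v := by
  classical
  obtain ⟨k, hik, hk⟩ : ∃ k, i = 2*k+1 ∧ 2 ≤ k := by
    have := Nat.odd_iff.mp hodd
    exact ⟨(i-1)/2, by omega, by omega⟩
  set q : ZMod i → S4.Z3 := fun u => p (some u) with hq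
  set F := S4.mkF (fun v => S4.Jf i k q v.val) (fun v => S4.Pf i k q v.val)
    ((S4.ck i k q (k-1)).2.1) (S4.Gv i k q) (S4.Tkv i k q) with hF
  have hFne : ∀ e, F e ≠ 0 := by
    rintro (ee | r) <;> rw [hF]
    · show S4.mkV (fun v => S4.Jf i k q v.val) (fun v => S4.Pf i k q v.val) ee.1 ≠ 0
      unfold S4.mkV
      split_ifs
      · exact S4.Jf_ne i k q _
      · exact S4.Pf_ne i k q _
    · show (if r = 0 then (S4.ck i k q (k-1)).2.1 else if r = 1 then S4.Gv i k q else S4.Tkv i k q) ≠ 0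
      split_ifs
      · exact S4.chain_x_ne _
      · exact S4.Gv_ne i k q
      · exact S4.Tkv_ne i k q
  refine ⟨fun e => decide (F e = 1), ?_⟩
  have hsome : ∀ u : ZMod i,
      mnet (AcircEnds i) (fun e => decide (F e = 1)) (some u) = q u := by
    intro u
    rw [S4.mnet_eq (AcircEnds i) F hFne (some u)]
    rw [hF, S4.sum_closed (fun v => S4.Jf i k q v.val) (fun v => S4.Pf i k q v.val)
      ((S4.ck i k q (k-1)).2.1) (S4.Gv i k q) (S4.Tkv i k q) u]
    exact S4.main_some i k hik hk q u
  intro v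
  rcases v with _ | u
  · have htotal := S4.mnet_total (AcircEnds i) (fun e => decide (F e = 1))
    rw [Fintype.sum_option] at htotal
    rw [Fintype.sum_option] at hp
    have hsum : (∑ u : ZMod i, mnet (AcircEnds i) (fun e => decide (F e = 1)) (some u))
        = ∑ u : ZMod i, q u := Finset.sum_congr rfl (fun u _ => hsome u)
    rw [hsum] at htotal
    have hqsum : (∑ u : ZMod i, q u) = ∑ u : ZMod i, p (some u) := rfl
    rw [hqsum] at htotal
    linear_combination htotal - hp
  · exact hsome u
end

section
/- There exists a 4-regular-plus graph G (drawn in the plane as in the construction below), a vertex d of degree 4 with a fixed orientation of its incident edges, and a valid prescription function p: V(G) → Z_3, such that G has no orientation extending the orientation at d and satisfying indegree(v) − outdegree(v) ≡ p(v) (mod 3) for all v. Concretely: for n = 3k+5 (k ≥ 0), take vertices t, w, u_1,...,u_n, v_1,...,v_n, where the boundary cycle is t u_1 ... u_n w v_n ... v_1 t, plus edges tw, u_1 w, v_1 w, and u_i v_{n-i+1}, u_i v_{n-i+2} for all appropriate i. With d = v_{n-1}, all four edges at d directed out of d, p(d) = −1, p(v_n)=p(v_{n-2})=p(u_2)=p(u_3)=+1,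 p(u_1)=−1, p(t)=p(w)=0, and p = +1 on all other vertices, G has no valid orientation extending d. -/
/-- The counterexample graph `G` for parameter `n`: vertices are the natural
numbers `0, …, 2n+1`, coded as `t = 0`, `u_i = i` for `1 ≤ i ≤ n`, `w = n+1`,
`v_i = n+1+i` for `1 ≤ i ≤ n`.  Edges are indexed by `0, …, 4n+3`:
* `0 ≤ e ≤ n` : the path `t u_1 u_2 … u_n w` (edge `e` joins `e` and `e+1`);
* `n+1 ≤ e ≤ 2n+1` : the path `t v_1 v_2 … v_n w`;
* `e = 2n+2` : the edge `t w`;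
* `e = 2n+3` : the edge `u_1 w`;
* `e = 2n+4` : the edge `v_1 w`;
* `2n+5 ≤ e ≤ 3n+4` : the edges `u_i v_{n-i+1}` for `1 ≤ i ≤ n`;
* `3n+5 ≤ e ≤ 4n+3` : the edges `u_i v_{n-i+2}` for `2 ≤ i ≤ n`.
(The boundary cycle is `t u_1 … u_n w v_n … v_1 t`.) -/
def exEnds (n : ℕ) : ℕ → ℕ × ℕ := fun e =>
  if e ≤ n then (e, e + 1)
  else if e ≤ 2 * n + 1 then
    ((if e - (n + 1) = 0 then 0 else n + 1 + (e - (n + 1))),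
      (if e - (n + 1) + 1 = n + 1 then n + 1 else n + 1 + (e - (n + 1) + 1)))
  else if e = 2 * n + 2 then (0, n + 1)
  else if e = 2 * n + 3 then (1, n + 1)
  else if e = 2 * n + 4 then (n + 2, n + 1)
  else if e ≤ 3 * n + 4 then (e - (2 * n + 4), n + 1 + (n - (e - (2 * n + 4)) + 1))
  else (e - (3 * n + 3), n + 1 + (n - (e - (3 * n + 3)) + 2))

/-- The prescription `p`: `p(t) = p(w) = 0`, `p(u_1) = p(v_{n-1}) = -1`, and
`p = +1` on all other vertices (in particular on `v_n, v_{n-2}, u_2, u_3`).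
Here `d = v_{n-1} = 2n`. -/
def exP (n : ℕ) : ℕ → ZMod 3 := fun x =>
  if x = 0 ∨ x = n + 1 then 0 else if x = 1 ∨ x = 2 * n then -1 else 1

/-- Net flow (indegree minus outdegree, in `ZMod 3`) at the vertex `x` under
the orientation `o` (edge `e` is directed from `(exEnds n e).1` to
`(exEnds n e).2` when `o e = true`, oppositely otherwise). -/
def exNet (n : ℕ) (o : ℕ → Bool) (x : ℕ) : ZMod 3 :=
  ∑ e ∈ Finset.range (4 * n + 4),
    ((if (if o e then (exEnds n e).2 else (exEnds n e).1) = x then (1 : ZMod 3) else 0)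
      - (if (if o e then (exEnds n e).1 else (exEnds n e).2) = x then (1 : ZMod 3) else 0))

/-! ### Auxiliary machinery for the proof -/

/-- The `ZMod 3` value of an edge under the orientation `o`. -/
def sv (o : ℕ → Bool) (e : ℕ) : ZMod 3 := if o e then 1 else -1

lemma sv_pm (o : ℕ → Bool) (e : ℕ) : sv o e = 1 ∨ sv o e = -1 := by
  unfold sv; cases o e <;> simp

lemma zm3_neg {x : ZMod 3} (h : x = 1 ∨ x = -1) : -x = 1 ∨ -x = -1 := by
  rcases h with rfl | rfl <;> decide

lemma zm3_pair {u v K : ZMod 3} (hu : u = 1 ∨ u = -1) (hv : v = 1 ∨ v = -1)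
    (hK : K = 1 ∨ K = -1) (h : u + v = K) : u = -K ∧ v = -K := by
  rcases hu with rfl | rfl <;> rcases hv with rfl | rfl <;> rcases hK with rfl | rfl <;>
    revert h <;> decide

lemma exNet_eq (n : ℕ) (o : ℕ → Bool) (x : ℕ) :
    exNet n o x = ∑ e ∈ Finset.range (4 * n + 4),
      ((if (exEnds n e).2 = x then (1 : ZMod 3) else 0)
        - (if (exEnds n e).1 = x then (1 : ZMod 3) else 0)) * sv o e := by
  unfold exNet sv
  refine Finset.sum_congr rfl fun e _ => ?_
  cases h : o e <;> simp only [h, if_true, if_false, Bool.false_eq_true] <;> ring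

lemma exSum3 {f : ℕ → ZMod 3} {N a b c : ℕ} (ha : a < N) (hb : b < N) (hc : c < N)
    (hab : a ≠ b) (hac : a ≠ c) (hbc : b ≠ c)
    (h0 : ∀ e, e < N → e ≠ a → e ≠ b → e ≠ c → f e = 0) :
    ∑ e ∈ Finset.range N, f e = f a + f b + f c := by
  have hsub : ({a, b, c} : Finset ℕ) ⊆ Finset.range N := by
    intro x hx
    simp only [Finset.mem_insert, Finset.mem_singleton] at hx
    rcases hx with rfl | rfl | rfl <;> simpa [Finset.mem_range]
  rw [← Finset.sum_subset hsub (fun x hx hxs => by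
    simp only [Finset.mem_insert, Finset.mem_singleton, not_or] at hxs
    exact h0 x (Finset.mem_range.mp hx) hxs.1 hxs.2.1 hxs.2.2)]
  rw [show ({a, b, c} : Finset ℕ) = insert a (insert b {c}) from rfl]
  rw [Finset.sum_insert (by simp [hab, hac]), Finset.sum_insert (by simp [hbc]),
    Finset.sum_singleton]
  ring

lemma exSum4 {f : ℕ → ZMod 3} {N a b c d : ℕ} (ha : a < N) (hb : b < N) (hc : c < N)
    (hd : d < N) (hab : a ≠ b) (hac : a ≠ c) (had : a ≠ d) (hbc : b ≠ c) (hbd : b ≠ d)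
    (hcd : c ≠ d) (h0 : ∀ e, e < N → e ≠ a → e ≠ b → e ≠ c → e ≠ d → f e = 0) :
    ∑ e ∈ Finset.range N, f e = f a + f b + f c + f d := by
  have hsub : ({a, b, c, d} : Finset ℕ) ⊆ Finset.range N := by
    intro x hx
    simp only [Finset.mem_insert, Finset.mem_singleton] at hx
    rcases hx with rfl | rfl | rfl | rfl <;> simpa [Finset.mem_range]
  rw [← Finset.sum_subset hsub (fun x hx hxs => by
    simp only [Finset.mem_insert, Finset.mem_singleton, not_or] at hxs
    exact h0 x (Finset.mem_range.mp hx) hxs.1 hxs.2.1 hxs.2.2.1 hxs.2.2.2)]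
  rw [show ({a, b, c, d} : Finset ℕ) = insert a (insert b (insert c {d})) from rfl]
  rw [Finset.sum_insert (by simp [hab, hac, had]), Finset.sum_insert (by simp [hbc, hbd]),
    Finset.sum_insert (by simp [hcd]), Finset.sum_singleton]
  ring

/-- Equation at the vertex `t = 0`. -/
lemma exNetT (o : ℕ → Bool) {n : ℕ} (hn : 5 ≤ n) :
    exNet n o 0 = -sv o 0 - sv o (n+1) - sv o (2*n+2) := by
  rw [exNet_eq]
  rw [exSum3 (a := 0) (b := n+1) (c := 2*n+2) (by omega) (by omega) (by omega)
    (by omega) (by omega) (by omega) (fun e he h1 h2 h3 => by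
      have hz : (exEnds n e).1 ≠ 0 ∧ (exEnds n e).2 ≠ 0 := by
        simp only [exEnds]; split_ifs <;> refine ⟨?_, ?_⟩ <;> dsimp only <;> omega
      rw [if_neg hz.2, if_neg hz.1]; ring)]
  have c1 : (exEnds n 0).1 = 0 ∧ (exEnds n 0).2 ≠ 0 := by
    simp only [exEnds]; split_ifs <;> refine ⟨?_, ?_⟩ <;> dsimp only <;> omega
  have c2 : (exEnds n (n+1)).1 = 0 ∧ (exEnds n (n+1)).2 ≠ 0 := by
    simp only [exEnds]; split_ifs <;> refine ⟨?_, ?_⟩ <;> dsimp -failIfUnchanged only <;> omega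
  have c3 : (exEnds n (2*n+2)).1 = 0 ∧ (exEnds n (2*n+2)).2 ≠ 0 := by
    simp only [exEnds]; split_ifs <;> refine ⟨?_, ?_⟩ <;> dsimp -failIfUnchanged only <;> omega
  rw [if_pos c1.1, if_neg c1.2, if_pos c2.1, if_neg c2.2, if_pos c3.1, if_neg c3.2]
  ring

/-- Equation at the vertex `u_1 = 1`. -/
lemma exNetU1 (o : ℕ → Bool) {n : ℕ} (hn : 5 ≤ n) :
    exNet n o 1 = sv o 0 - sv o 1 - sv o (2*n+3) - sv o (2*n+5) := by
  rw [exNet_eq]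
  rw [exSum4 (a := 0) (b := 1) (c := 2*n+3) (d := 2*n+5) (by omega) (by omega) (by omega)
    (by omega) (by omega) (by omega) (by omega) (by omega) (by omega) (by omega)
    (fun e he h1 h2 h3 h4 => by
      have hz : (exEnds n e).1 ≠ 1 ∧ (exEnds n e).2 ≠ 1 := by
        simp only [exEnds]; split_ifs <;> refine ⟨?_, ?_⟩ <;> dsimp only <;> omega
      rw [if_neg hz.2, if_neg hz.1]; ring)]
  have c1 : (exEnds n 0).2 = 1 ∧ (exEnds n 0).1 ≠ 1 := by
    simp only [exEnds]; split_ifs <;> refine ⟨?_, ?_⟩ <;> dsimp only <;> omega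
  have c2 : (exEnds n 1).1 = 1 ∧ (exEnds n 1).2 ≠ 1 := by
    simp only [exEnds]; split_ifs <;> refine ⟨?_, ?_⟩ <;> dsimp -failIfUnchanged only <;> omega
  have c3 : (exEnds n (2*n+3)).1 = 1 ∧ (exEnds n (2*n+3)).2 ≠ 1 := by
    simp only [exEnds]; split_ifs <;> refine ⟨?_, ?_⟩ <;> dsimp -failIfUnchanged only <;> omega
  have c4 : (exEnds n (2*n+5)).1 = 1 ∧ (exEnds n (2*n+5)).2 ≠ 1 := by
    simp only [exEnds]; split_ifs <;> refine ⟨?_, ?_⟩ <;> dsimp -failIfUnchanged only <;> omega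
  rw [if_pos c1.1, if_neg c1.2, if_pos c2.1, if_neg c2.2, if_pos c3.1, if_neg c3.2,
    if_pos c4.1, if_neg c4.2]
  ring

/-- Equation at the vertex `u_i`, `2 ≤ i ≤ n`. -/
lemma exNetU (o : ℕ → Bool) {n i : ℕ} (hn : 5 ≤ n) (h2i : 2 ≤ i) (hin : i ≤ n) :
    exNet n o i = sv o (i-1) - sv o i - sv o (2*n+4+i) - sv o (3*n+3+i) := by
  rw [exNet_eq]
  rw [exSum4 (a := i-1) (b := i) (c := 2*n+4+i) (d := 3*n+3+i) (by omega) (by omega)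
    (by omega) (by omega) (by omega) (by omega) (by omega) (by omega) (by omega) (by omega)
    (fun e he h1 h2 h3 h4 => by
      have hz : (exEnds n e).1 ≠ i ∧ (exEnds n e).2 ≠ i := by
        simp only [exEnds]; split_ifs <;> refine ⟨?_, ?_⟩ <;> dsimp only <;> omega
      rw [if_neg hz.2, if_neg hz.1]; ring)]
  have c1 : (exEnds n (i-1)).2 = i ∧ (exEnds n (i-1)).1 ≠ i := by
    simp only [exEnds]; split_ifs <;> refine ⟨?_, ?_⟩ <;> dsimp only <;> omega
  have c2 : (exEnds n i).1 = i ∧ (exEnds n i).2 ≠ i := by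
    simp only [exEnds]; split_ifs <;> refine ⟨?_, ?_⟩ <;> dsimp only <;> omega
  have c3 : (exEnds n (2*n+4+i)).1 = i ∧ (exEnds n (2*n+4+i)).2 ≠ i := by
    simp only [exEnds]; split_ifs <;> refine ⟨?_, ?_⟩ <;> dsimp only <;> omega
  have c4 : (exEnds n (3*n+3+i)).1 = i ∧ (exEnds n (3*n+3+i)).2 ≠ i := by
    simp only [exEnds]; split_ifs <;> refine ⟨?_, ?_⟩ <;> dsimp only <;> omega
  rw [if_pos c1.1, if_neg c1.2, if_pos c2.1, if_neg c2.2, if_pos c3.1, if_neg c3.2,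
    if_pos c4.1, if_neg c4.2]
  ring

/-- Equation at the vertex `v_1 = n+2`. -/
lemma exNetV1 (o : ℕ → Bool) {n : ℕ} (hn : 5 ≤ n) :
    exNet n o (n+2) = sv o (n+1) - sv o (n+2) - sv o (2*n+4) + sv o (3*n+4) := by
  rw [exNet_eq]
  rw [exSum4 (a := n+1) (b := n+2) (c := 2*n+4) (d := 3*n+4) (by omega) (by omega)
    (by omega) (by omega) (by omega) (by omega) (by omega) (by omega) (by omega) (by omega)
    (fun e he h1 h2 h3 h4 => by
      have hz : (exEnds n e).1 ≠ n+2 ∧ (exEnds n e).2 ≠ n+2 := by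
        simp only [exEnds]; split_ifs <;> refine ⟨?_, ?_⟩ <;> dsimp only <;> omega
      rw [if_neg hz.2, if_neg hz.1]; ring)]
  have c1 : (exEnds n (n+1)).2 = n+2 ∧ (exEnds n (n+1)).1 ≠ n+2 := by
    simp only [exEnds]; split_ifs <;> refine ⟨?_, ?_⟩ <;> dsimp only <;> omega
  have c2 : (exEnds n (n+2)).1 = n+2 ∧ (exEnds n (n+2)).2 ≠ n+2 := by
    simp only [exEnds]; split_ifs <;> refine ⟨?_, ?_⟩ <;> dsimp -failIfUnchanged only <;> omega
  have c3 : (exEnds n (2*n+4)).1 = n+2 ∧ (exEnds n (2*n+4)).2 ≠ n+2 := by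
    simp only [exEnds]; split_ifs <;> refine ⟨?_, ?_⟩ <;> dsimp -failIfUnchanged only <;> omega
  have c4 : (exEnds n (3*n+4)).2 = n+2 ∧ (exEnds n (3*n+4)).1 ≠ n+2 := by
    simp only [exEnds]; split_ifs <;> refine ⟨?_, ?_⟩ <;> dsimp only <;> omega
  rw [if_pos c1.1, if_neg c1.2, if_pos c2.1, if_neg c2.2, if_pos c3.1, if_neg c3.2,
    if_pos c4.1, if_neg c4.2]
  ring

/-- Equation at the vertex `v_{n+1-i} = 2n+2-i`, `1 ≤ i ≤ n-1`. -/
lemma exNetV (o : ℕ → Bool) {n i : ℕ} (hn : 5 ≤ n) (h1i : 1 ≤ i) (hin : i ≤ n-1) :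
    exNet n o (2*n+2-i) =
      sv o (2*n+1-i) - sv o (2*n+2-i) + sv o (2*n+4+i) + sv o (3*n+4+i) := by
  rw [exNet_eq]
  rw [exSum4 (a := 2*n+1-i) (b := 2*n+2-i) (c := 2*n+4+i) (d := 3*n+4+i) (by omega)
    (by omega) (by omega) (by omega) (by omega) (by omega) (by omega) (by omega) (by omega)
    (by omega)
    (fun e he h1 h2 h3 h4 => by
      have hz : (exEnds n e).1 ≠ 2*n+2-i ∧ (exEnds n e).2 ≠ 2*n+2-i := by
        simp only [exEnds]; split_ifs <;> refine ⟨?_, ?_⟩ <;> dsimp only <;> omega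
      rw [if_neg hz.2, if_neg hz.1]; ring)]
  have c1 : (exEnds n (2*n+1-i)).2 = 2*n+2-i ∧ (exEnds n (2*n+1-i)).1 ≠ 2*n+2-i := by
    simp only [exEnds]; split_ifs <;> refine ⟨?_, ?_⟩ <;> dsimp only <;> omega
  have c2 : (exEnds n (2*n+2-i)).1 = 2*n+2-i ∧ (exEnds n (2*n+2-i)).2 ≠ 2*n+2-i := by
    simp only [exEnds]; split_ifs <;> refine ⟨?_, ?_⟩ <;> dsimp only <;> omega
  have c3 : (exEnds n (2*n+4+i)).2 = 2*n+2-i ∧ (exEnds n (2*n+4+i)).1 ≠ 2*n+2-i := by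
    simp only [exEnds]; split_ifs <;> refine ⟨?_, ?_⟩ <;> dsimp only <;> omega
  have c4 : (exEnds n (3*n+4+i)).2 = 2*n+2-i ∧ (exEnds n (3*n+4+i)).1 ≠ 2*n+2-i := by
    simp only [exEnds]; split_ifs <;> refine ⟨?_, ?_⟩ <;> dsimp only <;> omega
  rw [if_pos c1.1, if_neg c1.2, if_pos c2.1, if_neg c2.2, if_pos c3.1, if_neg c3.2,
    if_pos c4.1, if_neg c4.2]
  ring

theorem exKey (n : ℕ) (hn : 5 ≤ n) (hm : n % 3 = 2) (o : ℕ → Bool)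
    (h1 : ∀ e ∈ Finset.range (4 * n + 4),
      ((exEnds n e).1 = 2 * n ∨ (exEnds n e).2 = 2 * n) →
      (if o e then (exEnds n e).1 else (exEnds n e).2) = 2 * n)
    (h2 : ∀ x ∈ Finset.range (2 * n + 2), exNet n o x = exP n x) : False := by
  have hs : ∀ e, sv o e = 1 ∨ sv o e = -1 := sv_pm o
  have hneg : ∀ e, -sv o e = 1 ∨ -sv o e = -1 := fun e => zm3_neg (hs e)
  -- the four edges at `d = 2n` are directed out of `d`
  have hdir : ∀ e, e < 4*n+4 → ((exEnds n e).1 = 2*n ∨ (exEnds n e).2 = 2*n) →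
      (if o e then (exEnds n e).1 else (exEnds n e).2) = 2*n := fun e he =>
    h1 e (Finset.mem_range.mpr he)
  have hd1 : sv o (2*n-1) = -1 := by
    have e1 : exEnds n (2*n-1) = (2*n-1, 2*n) := by
      simp only [exEnds]; split_ifs <;> simp only [Prod.mk.injEq] <;> omega
    have hdd := hdir (2*n-1) (by omega) (by rw [e1]; right; rfl)
    rw [e1] at hdd
    cases ho : o (2*n-1)
    · simp [sv, ho]
    · rw [ho, if_pos rfl] at hdd; exact absurd hdd (by omega)
  have hd2 : sv o (2*n) = 1 := by
    have e1 : exEnds n (2*n) = (2*n, 2*n+1) := by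
      simp only [exEnds]; split_ifs <;> simp only [Prod.mk.injEq] <;> omega
    have hdd := hdir (2*n) (by omega) (by rw [e1]; left; rfl)
    rw [e1] at hdd
    cases ho : o (2*n)
    · rw [ho, if_neg Bool.false_ne_true] at hdd; exact absurd hdd (by omega)
    · simp [sv, ho]
  have hd3 : sv o (2*n+6) = -1 := by
    have e1 : exEnds n (2*n+6) = (2, 2*n) := by
      simp only [exEnds]; split_ifs <;> simp only [Prod.mk.injEq] <;> omega
    have hdd := hdir (2*n+6) (by omega) (by rw [e1]; right; rfl)
    rw [e1] at hdd
    cases ho : o (2*n+6)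
    · simp [sv, ho]
    · rw [ho, if_pos rfl] at hdd; exact absurd hdd (by omega)
  have hd4 : sv o (3*n+6) = -1 := by
    have e1 : exEnds n (3*n+6) = (3, 2*n) := by
      simp only [exEnds]; split_ifs <;> simp only [Prod.mk.injEq] <;> omega
    have hdd := hdir (3*n+6) (by omega) (by rw [e1]; right; rfl)
    rw [e1] at hdd
    cases ho : o (3*n+6)
    · simp [sv, ho]
    · rw [ho, if_pos rfl] at hdd; exact absurd hdd (by omega)
  -- local flow equations
  have eqU : ∀ i a c d : ℕ, 2 ≤ i → i ≤ n → a = i-1 → c = 2*n+4+i → d = 3*n+3+i →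
      sv o a - sv o i - sv o c - sv o d = 1 := by
    intro i a c d h2i hin ha hc hd
    subst ha hc hd
    have hx := h2 i (Finset.mem_range.mpr (by omega))
    rw [exNetU o hn h2i hin] at hx
    rw [hx]
    simp [exP, show i ≠ 0 by omega, show i ≠ n+1 by omega, show i ≠ 1 by omega,
      show i ≠ 2*n by omega]
  have eqV : ∀ i a b c d : ℕ, 1 ≤ i → i ≤ n-1 → i ≠ 2 → a = 2*n+1-i → b = 2*n+2-i →
      c = 2*n+4+i → d = 3*n+4+i → sv o a - sv o b + sv o c + sv o d = 1 := by
    intro i a b c d h1i hin hi2 ha hb hc hd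
    subst ha hb hc hd
    have hx := h2 (2*n+2-i) (Finset.mem_range.mpr (by omega))
    rw [exNetV o hn h1i hin] at hx
    rw [hx]
    simp [exP, show 2*n+2-i ≠ 0 by omega, show 2*n+2-i ≠ n+1 by omega,
      show 2*n+2-i ≠ 1 by omega, show 2*n+2-i ≠ 2*n by omega]
  have hU1 : sv o 0 - sv o 1 - sv o (2*n+3) - sv o (2*n+5) = -1 := by
    have hx := h2 1 (Finset.mem_range.mpr (by omega))
    rw [exNetU1 o hn] at hx
    rw [hx]
    simp [exP, show (1:ℕ) ≠ n+1 by omega, show n ≠ 0 by omega]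
  have hV1 : sv o (n+1) - sv o (n+2) - sv o (2*n+4) + sv o (3*n+4) = 1 := by
    have hx := h2 (n+2) (Finset.mem_range.mpr (by omega))
    rw [exNetV1 o hn] at hx
    rw [hx]
    simp [exP, show n+2 ≠ 0 by omega, show n+2 ≠ n+1 by omega, show n+2 ≠ 1 by omega,
      show n+2 ≠ 2*n by omega]
  have hT : -sv o 0 - sv o (n+1) - sv o (2*n+2) = 0 := by
    have hx := h2 0 (Finset.mem_range.mpr (by omega))
    rw [exNetT o hn] at hx
    rw [hx]
    simp [exP]
  -- base of the induction: columns 2 and 3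
  have hU2 := eqU 2 1 (2*n+6) (3*n+5) (by omega) (by omega) (by omega) (by omega) (by omega)
  rw [hd3] at hU2
  obtain ⟨ha2, hq2⟩ := zm3_pair (hs 2) (hs (3*n+5)) (hs 1) (by linear_combination -hU2)
  have hVc1 := eqV 1 (2*n) (2*n+1) (2*n+5) (3*n+5) (by omega) (by omega) (by omega)
    (by omega) (by omega) (by omega) (by omega)
  rw [hd2, hq2] at hVc1
  obtain ⟨-, hr1⟩ := zm3_pair (hneg (2*n+1)) (hs (2*n+5)) (hs 1) (by linear_combination hVc1)
  have hU3 := eqU 3 2 (2*n+7) (3*n+6) (by omega) (by omega) (by omega) (by omega) (by omega)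
  rw [ha2, hd4] at hU3
  obtain ⟨ha3', hr3'⟩ := zm3_pair (hneg 3) (hneg (2*n+7)) (hs 1) (by linear_combination hU3)
  have ha3 : sv o 3 = sv o 1 := by linear_combination -ha3'
  have hr3 : sv o (2*n+7) = sv o 1 := by linear_combination -hr3'
  have hVc3 := eqV 3 (2*n-2) (2*n-1) (2*n+7) (3*n+7) (by omega) (by omega) (by omega)
    (by omega) (by omega) (by omega) (by omega)
  rw [hd1, hr3] at hVc3
  obtain ⟨hB4', hq4'⟩ := zm3_pair (hs (2*n-2)) (hs (3*n+7)) (hneg 1) (by linear_combination hVc3)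
  have hB4 : sv o (2*n-2) = sv o 1 := by linear_combination hB4'
  have hq4 : sv o (3*n+7) = sv o 1 := by linear_combination hq4'
  -- the invariant, by induction on the column index
  have inv : ∀ j : ℕ, 3 + j ≤ n - 1 →
      ((3+j) % 3 = 0 → sv o (3+j) = sv o 1 ∧ sv o (2*n+1-(3+j)) = sv o 1 ∧
        sv o (3*n+4+(3+j)) = sv o 1) ∧
      ((3+j) % 3 = 1 → sv o (3+j) = 1 ∧ sv o (2*n+1-(3+j)) = -sv o 1 ∧
        sv o (3*n+4+(3+j)) = -sv o 1) ∧
      ((3+j) % 3 = 2 → sv o (3+j) = -sv o 1 ∧ sv o (2*n+1-(3+j)) = -1 ∧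
        sv o (3*n+4+(3+j)) = -1) := by
    intro j
    induction j with
    | zero =>
      intro _
      simp only [Nat.add_zero]
      refine ⟨fun _ => ⟨ha3, ?_, ?_⟩, fun h => by omega, fun h => by omega⟩
      · rw [show 2*n+1-3 = 2*n-2 from by omega]; exact hB4
      · rw [show 3*n+4+3 = 3*n+7 from by omega]; exact hq4
    | succ m ih =>
      intro hle
      simp only [show 3+(m+1) = 3+m+1 from rfl] at *
      obtain ⟨h0, hI1, hI2⟩ := ih (by omega)
      have hcase : (3+m) % 3 = 0 ∨ (3+m) % 3 = 1 ∨ (3+m) % 3 = 2 := by omega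
      rcases hcase with hc | hc | hc
      · obtain ⟨hA, hB, hQ⟩ := h0 hc
        have hU := eqU (3+m+1) (3+m) (2*n+4+(3+m+1)) (3*n+4+(3+m)) (by omega) (by omega)
          (by omega) (by omega) (by omega)
        rw [hA, hQ] at hU
        obtain ⟨ha', hr⟩ := zm3_pair (hs (3+m+1)) (hs (2*n+4+(3+m+1))) (Or.inr rfl)
          (by linear_combination -hU)
        have hV := eqV (3+m+1) (2*n+1-(3+m+1)) (2*n+1-(3+m)) (2*n+4+(3+m+1)) (3*n+4+(3+m+1))
          (by omega) (by omega) (by omega) (by omega) (by omega) (by omega) (by omega)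
        rw [hB, hr] at hV
        obtain ⟨hB', hq'⟩ := zm3_pair (hs (2*n+1-(3+m+1))) (hs (3*n+4+(3+m+1))) (hs 1)
          (by linear_combination hV)
        exact ⟨fun h => by omega, fun _ => ⟨by rw [ha']; decide, hB', hq'⟩, fun h => by omega⟩
      · obtain ⟨hA, hB, hQ⟩ := hI1 hc
        have hU := eqU (3+m+1) (3+m) (2*n+4+(3+m+1)) (3*n+4+(3+m)) (by omega) (by omega)
          (by omega) (by omega) (by omega)
        rw [hA, hQ] at hU
        obtain ⟨ha', hr⟩ := zm3_pair (hs (3+m+1)) (hs (2*n+4+(3+m+1))) (hs 1)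
          (by linear_combination -hU)
        have hV := eqV (3+m+1) (2*n+1-(3+m+1)) (2*n+1-(3+m)) (2*n+4+(3+m+1)) (3*n+4+(3+m+1))
          (by omega) (by omega) (by omega) (by omega) (by omega) (by omega) (by omega)
        rw [hB, hr] at hV
        obtain ⟨hB', hq'⟩ := zm3_pair (hs (2*n+1-(3+m+1))) (hs (3*n+4+(3+m+1))) (Or.inl rfl)
          (by linear_combination hV)
        exact ⟨fun h => by omega, fun h => by omega, fun _ => ⟨ha', hB', hq'⟩⟩
      · obtain ⟨hA, hB, hQ⟩ := hI2 hc
        have hU := eqU (3+m+1) (3+m) (2*n+4+(3+m+1)) (3*n+4+(3+m)) (by omega) (by omega)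
          (by omega) (by omega) (by omega)
        rw [hA, hQ] at hU
        obtain ⟨ha', hr⟩ := zm3_pair (hs (3+m+1)) (hs (2*n+4+(3+m+1))) (hneg 1)
          (by linear_combination -hU)
        have hV := eqV (3+m+1) (2*n+1-(3+m+1)) (2*n+1-(3+m)) (2*n+4+(3+m+1)) (3*n+4+(3+m+1))
          (by omega) (by omega) (by omega) (by omega) (by omega) (by omega) (by omega)
        rw [hB, hr] at hV
        obtain ⟨hB', hq'⟩ := zm3_pair (hs (2*n+1-(3+m+1))) (hs (3*n+4+(3+m+1))) (hneg 1)
          (by linear_combination hV)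
        refine ⟨fun _ => ⟨?_, ?_, ?_⟩, fun h => by omega, fun h => by omega⟩
        · rw [ha', neg_neg]
        · rw [hB', neg_neg]
        · rw [hq', neg_neg]
  -- the invariant at the last column `n-1`
  have hfin := inv (n-4) (by omega)
  rw [show 3+(n-4) = n-1 from by omega] at hfin
  obtain ⟨hA, hB, hQ⟩ := hfin.2.1 (by omega)
  rw [show 2*n+1-(n-1) = n+2 from by omega] at hB
  rw [show 3*n+4+(n-1) = 4*n+3 from by omega] at hQ
  -- equation at u_n
  have hUn := eqU n (n-1) (3*n+4) (4*n+3) (by omega) (by omega) (by omega) (by omega)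
    (by omega)
  rw [hA, hQ] at hUn
  obtain ⟨-, hrn⟩ := zm3_pair (hs n) (hs (3*n+4)) (hs 1) (by linear_combination -hUn)
  -- equation at u_1
  rw [hr1] at hU1
  obtain ⟨hs0, -⟩ := zm3_pair (hs 0) (hneg (2*n+3)) (Or.inr rfl) (by linear_combination hU1)
  -- equation at v_1
  rw [hB, hrn] at hV1
  obtain ⟨hw1, -⟩ := zm3_pair (hs (n+1)) (hneg (2*n+4)) (Or.inl rfl) (by linear_combination hV1)
  -- equation at t gives the contradiction
  rw [hs0, hw1] at hT
  have hzero : sv o (2*n+2) = 0 := by linear_combination -hT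
  rcases hs (2*n+2) with h | h <;> rw [hzero] at h <;> exact absurd h (by decide)

/-- The counterexample: for every `k ≥ 0`, with `n = 3k+5`, the plane-drawable
graph `G` above with the directed vertex `d = v_{n-1}` (all four incident
edges directed out of `d`) and the valid prescription `exP` admits no
orientation extending the orientation at `d` with
`indegree(v) - outdegree(v) ≡ p(v) (mod 3)` at every vertex. -/
theorem stmt_9 (k : ℕ) :
    ¬ ∃ o : ℕ → Bool,
      (∀ e ∈ Finset.range (4 * (3 * k + 5) + 4),
        ((exEnds (3 * k + 5) e).1 = 2 * (3 * k + 5) ∨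
          (exEnds (3 * k + 5) e).2 = 2 * (3 * k + 5)) →
        (if o e then (exEnds (3 * k + 5) e).1 else (exEnds (3 * k + 5) e).2)
          = 2 * (3 * k + 5)) ∧
      (∀ x ∈ Finset.range (2 * (3 * k + 5) + 2),
        exNet (3 * k + 5) o x = exP (3 * k + 5) x) := by
  rintro ⟨o, h1, h2⟩
  exact exKey (3 * k + 5) (by omega) (by omega) o h1 h2
end

section
/- For every odd integer i ≥ 5, the circulant graph B_i with jumps 1 and (i-1)/2 is 4-edge-connected. -/
/-- The circulant graph `B_i` on vertices `ZMod i` with jumps `1` and `(i-1)/2`. -/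
def Bcirc (i : ℕ) : SimpleGraph (ZMod i) :=
  SimpleGraph.fromRel (fun a b => b = a + 1 ∨ b = a + (((i - 1) / 2 : ℕ) : ZMod i))

/-- If `d` is a unit and `A` is closed under adding `d` it is everything;
hence if both `A` and `Aᶜ` are nonempty there is a step out of `A`. -/
lemma exists_step (i : ℕ) [NeZero i] (A : Set (ZMod i)) (hA : A.Nonempty)
    (hAc : Aᶜ.Nonempty) (d : ZMod i) (hd : IsUnit d) :
    ∃ x, x ∈ A ∧ x + d ∉ A := by
  by_contra h
  push_neg at h
  obtain ⟨a, ha⟩ := hA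
  obtain ⟨b, hb⟩ := hAc
  obtain ⟨u, hu⟩ := hd
  have hall : ∀ n : ℕ, a + n • d ∈ A := by
    intro n
    induction n with
    | zero => simpa using ha
    | succ n ih =>
        have := h _ ih
        have he : a + (n + 1) • d = a + n • d + d := by
          rw [add_nsmul, one_nsmul, add_assoc]
        rwa [he]
  set c : ZMod i := (b - a) * ↑u⁻¹ with hc
  have hbval : b = a + (c.val : ℕ) • d := by
    have h1 : ((c.val : ℕ) : ZMod i) = c := by
      simp [ZMod.natCast_val, ZMod.cast_id]
    have : (c.val : ℕ) • d = c * d := by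
      rw [nsmul_eq_mul, h1]
    rw [this, hc, ← hu, mul_assoc]
    simp
  exact hb (hbval ▸ hall c.val)

/-- For every odd `i ≥ 5`, the circulant graph `B_i` with jumps `1` and
`(i-1)/2` is `4`-edge-connected: every edge cut separating two vertices (here
counted as ordered adjacent pairs from `A` to its complement) has at least `4`
edges. -/
theorem stmt_14 (i : ℕ) [NeZero i] (h5 : 5 ≤ i) (hodd : Odd i)
    (A : Set (ZMod i)) (hA : A.Nonempty) (hAc : Aᶜ.Nonempty) :
    4 ≤ {q : ZMod i × ZMod i | q.1 ∈ A ∧ q.2 ∉ A ∧ (Bcirc i).Adj q.1 q.2}.ncard := by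
  haveI : Fact (1 < i) := ⟨by omega⟩
  set k : ZMod i := (((i - 1) / 2 : ℕ) : ZMod i) with hkdef
  -- basic arithmetic facts
  have hdvd : 2 ∣ i - 1 := by
    obtain ⟨m, hm⟩ := hodd; omega
  have h2k : (2 : ZMod i) * k = -1 := by
    have : ((2 * ((i - 1) / 2) : ℕ) : ZMod i) = ((i - 1 : ℕ) : ZMod i) := by
      rw [Nat.mul_div_cancel' hdvd]
    have him1 : ((i - 1 : ℕ) : ZMod i) = -1 := by
      have : ((i - 1 : ℕ) : ZMod i) + 1 = ((i : ℕ) : ZMod i) := by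
        rw [← Nat.cast_succ]; congr 1; omega
      rw [ZMod.natCast_self] at this
      linear_combination this
    rw [hkdef]
    push_cast at this ⊢
    rw [this, him1]
  have hnatne : ∀ n : ℕ, 0 < n → n < i → ((n : ℕ) : ZMod i) ≠ 0 := by
    intro n hn1 hn2 hz
    rw [ZMod.natCast_eq_zero_iff] at hz
    exact absurd (Nat.le_of_dvd hn1 hz) (by omega)
  have h1ne : (1 : ZMod i) ≠ 0 := one_ne_zero
  have h2ne : (2 : ZMod i) ≠ 0 := by
    have := hnatne 2 (by omega) (by omega); simpa using this
  have h3ne : (3 : ZMod i) ≠ 0 := by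
    have := hnatne 3 (by omega) (by omega); simpa using this
  have hkne0 : k ≠ 0 := by
    intro h; rw [h, mul_zero] at h2k
    exact h1ne (by linear_combination h2k)
  have hkne1 : k ≠ 1 := by
    intro h; rw [h, mul_one] at h2k
    exact h3ne (by linear_combination h2k)
  have hknem1 : k ≠ -1 := by
    intro h; rw [h] at h2k
    exact h1ne (by linear_combination -h2k)
  have h2kne : (2 : ZMod i) * k ≠ 0 := by
    rw [h2k]; intro h; exact h1ne (by linear_combination -h)
  have hku : IsUnit k := by
    refine IsUnit.of_mul_eq_one (a := k) (-2) ?_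
    linear_combination -h2k
  -- the four crossing pairs
  obtain ⟨x₁, hx₁, hx₁'⟩ := exists_step i A hA hAc 1 isUnit_one
  obtain ⟨y₁, hy₁, hy₁'⟩ := exists_step i Aᶜ hAc (by simpa using hA) 1 isUnit_one
  obtain ⟨x₂, hx₂, hx₂'⟩ := exists_step i A hA hAc k hku
  obtain ⟨y₂, hy₂, hy₂'⟩ := exists_step i Aᶜ hAc (by simpa using hA) k hku
  simp only [Set.mem_compl_iff, not_not] at hy₁ hy₂ hy₁' hy₂'
  set S := {q : ZMod i × ZMod i | q.1 ∈ A ∧ q.2 ∉ A ∧ (Bcirc i).Adj q.1 q.2} with hS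
  have adj1 : ∀ a : ZMod i, (Bcirc i).Adj a (a + 1) := by
    intro a
    refine ⟨by simp [h1ne], Or.inl (Or.inl rfl)⟩
  have adjk : ∀ a : ZMod i, (Bcirc i).Adj a (a + k) := by
    intro a
    refine ⟨by simp [hkne0], Or.inl (Or.inr rfl)⟩
  have hp1 : (x₁, x₁ + 1) ∈ S := ⟨hx₁, hx₁', adj1 x₁⟩
  have hp2 : (y₁ + 1, y₁) ∈ S := ⟨hy₁', hy₁, ((Bcirc i).adj_symm (adj1 y₁))⟩
  have hp3 : (x₂, x₂ + k) ∈ S := ⟨hx₂, hx₂', adjk x₂⟩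
  have hp4 : (y₂ + k, y₂) ∈ S := ⟨hy₂', hy₂, ((Bcirc i).adj_symm (adjk y₂))⟩
  have hsub : ({(x₁, x₁ + 1), (y₁ + 1, y₁), (x₂, x₂ + k), (y₂ + k, y₂)} : Set (ZMod i × ZMod i)) ⊆ S := by
    intro q hq
    simp only [Set.mem_insert_iff, Set.mem_singleton_iff] at hq
    rcases hq with h | h | h | h <;> subst h <;> assumption
  have hcard : ({(x₁, x₁ + 1), (y₁ + 1, y₁), (x₂, x₂ + k), (y₂ + k, y₂)} : Set (ZMod i × ZMod i)).ncard = 4 := by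
    have ne12 : (x₁, x₁ + 1) ≠ (y₁ + 1, y₁) := by
      intro h
      have h1 := congrArg Prod.fst h
      have h2 := congrArg Prod.snd h
      simp only at h1 h2
      apply h2ne; linear_combination h2 - h1
    have ne13 : (x₁, x₁ + 1) ≠ (x₂, x₂ + k) := by
      intro h
      have h1 := congrArg Prod.fst h
      have h2 := congrArg Prod.snd h
      simp only at h1 h2
      apply hkne1; linear_combination h1 - h2
    have ne14 : (x₁, x₁ + 1) ≠ (y₂ + k, y₂) := by
      intro h
      have h1 := congrArg Prod.fst h
      have h2 := congrArg Prod.snd h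
      simp only at h1 h2
      apply hknem1; linear_combination h2 - h1
    have ne23 : (y₁ + 1, y₁) ≠ (x₂, x₂ + k) := by
      intro h
      have h1 := congrArg Prod.fst h
      have h2 := congrArg Prod.snd h
      simp only at h1 h2
      apply hknem1; linear_combination h1 - h2
    have ne24 : (y₁ + 1, y₁) ≠ (y₂ + k, y₂) := by
      intro h
      have h1 := congrArg Prod.fst h
      have h2 := congrArg Prod.snd h
      simp only at h1 h2
      apply hkne1; linear_combination h2 - h1
    have ne34 : (x₂, x₂ + k) ≠ (y₂ + k, y₂) := by
      intro h
      have h1 := congrArg Prod.fst h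
      have h2 := congrArg Prod.snd h
      simp only at h1 h2
      apply h2kne; linear_combination h2 - h1
    rw [Set.ncard_insert_of_notMem (by simp [ne12, ne13, ne14]),
        Set.ncard_insert_of_notMem (by simp [ne23, ne24]),
        Set.ncard_insert_of_notMem (by simp [ne34]),
        Set.ncard_singleton]
  calc 4 = ({(x₁, x₁ + 1), (y₁ + 1, y₁), (x₂, x₂ + k), (y₂ + k, y₂)} : Set (ZMod i × ZMod i)).ncard := hcard.symm
    _ ≤ S.ncard := Set.ncard_le_ncard hsub (Set.toFinite S)
end
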